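/- arXiv:1512.02079 — 3 statements merged into one kernel-verified Lean document; each statement's English description precedes it below -/
import Mathlib

section
/- Let F be a field of characteristic p > 0 and (b_1,m_1),…,(b_r,m_r) ∈ F^* × ℕ_{>0}. Then: (i) K_F((b_1,m_1),…,(b_r,m_r)) = K_F((b_{σ(1)},m_{σ(1)}),…,(b_{σ(r)},m_{σ(r)})) for every permutation σ of {1,…,r}; (ii) for every i ∈ {1,…,r}, K_F((b_1,m_1),…,(b_i^p, m_i+1),…,(b_r,m_r)) = K_F((b_1,m_1),…,(b_r,m_r)). -/
noncomputable section

/-- The full algebra of absolute differential forms of a field `F`: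
the exterior algebra of the `F`-module of absolute Kähler differentials `Ω[F⁄ℤ]`. -/
abbrev DF (F : Type*) [Field F] : Type _ :=
  ExteriorAlgebra F (KaehlerDifferential ℤ F)

/-- `Ω_F^n`, the space of differential `n`-forms, as a submodule of `DF F`. -/
def omegaPow (F : Type*) [Field F] (n : ℕ) : Submodule F (DF F) :=
  LinearMap.range (ExteriorAlgebra.ι F :
    KaehlerDifferential ℤ F →ₗ[F] DF F) ^ n

/-- `Ω_F^{n-1}`, with the convention `Ω_F^{-1} = 0`. -/
def omegaPred (F : Type*) [Field F] : ℕ → Submodule F (DF F)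
  | 0 => ⊥
  | n + 1 => omegaPow F n

/-- The exact 1-form `d a` of an element `a ∈ F`. -/
def dForm (F : Type*) [Field F] (a : F) : DF F :=
  ExteriorAlgebra.ι F (KaehlerDifferential.D ℤ F a)

/-- The logarithmic 1-form `da/a` of an element `a ∈ F`. -/
def dLog (F : Type*) [Field F] (a : F) : DF F :=
  ExteriorAlgebra.ι F (a⁻¹ • KaehlerDifferential.D ℤ F a)

/-- The logarithmic `n`-form `(dx₁/x₁) ∧ … ∧ (dxₙ/xₙ)`. -/
def logForm (F : Type*) [Field F] {n : ℕ} (x : Fin n → F) : DF F :=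
  (List.ofFn fun i => dLog F (x i)).prod

/-- The exterior derivative `d` together with the (`p`-basis dependent) additive map `s_p`
on the differential forms of a field `F` of characteristic `p`. -/
structure DiffStr (p : ℕ) (F : Type*) [Field F] where
  d : DF F →+ DF F
  sp : DF F →+ DF F
  d_grade : ∀ n : ℕ, ∀ ω ∈ omegaPow F n, d ω ∈ omegaPow F (n + 1)
  d_d : ∀ ω : DF F, d (d ω) = 0
  d_one : d 1 = 0
  d_smul : ∀ (a : F) (ω : DF F), d (a • ω) = dForm F a * ω + a • d ω
  sp_grade : ∀ n : ℕ, ∀ ω ∈ omegaPow F n, sp ω ∈ omegaPow F n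
  sp_log : ∀ (n : ℕ) (a : F) (x : Fin n → F),
      ∃ η ∈ omegaPred F n, sp (a • logForm F x) = a ^ p • logForm F x + d η

/-- The Artin–Schreier map `℘ = s_p − id` on differential forms. -/
def asMap {p : ℕ} {F : Type*} [Field F] (S : DiffStr p F) : DF F →+ DF F :=
  S.sp - AddMonoidHom.id (DF F)

/-- The subgroup `℘Ω_F^n + dΩ_F^{n-1}` of `Ω_F^n`; the group `H_p^{n+1}(F)` is the quotient
of `Ω_F^n` by this subgroup. -/
def hRel {p : ℕ} {F : Type*} [Field F] (S : DiffStr p F) (n : ℕ) : AddSubgroup (DF F) :=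
  ((omegaPow F n).toAddSubgroup.map (asMap S)) ⊔ ((omegaPred F n).toAddSubgroup.map S.d)

/-- The `t`-th iterate `v ↦ v^{[p^t]}` of the map `s_p`. -/
def spIter {p : ℕ} {F : Type*} [Field F] (S : DiffStr p F) (t : ℕ) : DF F → DF F :=
  (fun x => S.sp x)^[t]

/-- `ν_n(F) = ker(℘ : Ω_F^n → Ω_F^n/dΩ_F^{n-1})`. -/
def nuSet {p : ℕ} {F : Type*} [Field F] (S : DiffStr p F) (n : ℕ) : Set (DF F) :=
  { η | η ∈ omegaPow F n ∧ ∃ z ∈ omegaPred F n, S.sp η - η = S.d z }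

/-- Restriction of differential forms along a field extension `E/F`. -/
structure DiffRes (p : ℕ) (F E : Type*) [Field F] [Field E] [Algebra F E]
    (SF : DiffStr p F) (SE : DiffStr p E) where
  res : DF F →+ DF E
  res_one : res 1 = 1
  res_mul : ∀ x y : DF F, res (x * y) = res x * res y
  res_smul : ∀ (a : F) (ω : DF F), res (a • ω) = algebraMap F E a • res ω
  res_dForm : ∀ a : F, res (dForm F a) = dForm E (algebraMap F E a)
  res_grade : ∀ n : ℕ, ∀ ω ∈ omegaPow F n, res ω ∈ omegaPow E n
  res_d : ∀ ω : DF F, res (SF.d ω) = SE.d (res ω)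

/-- The generators of the group `K_F((b₁,m₁),…,(b_r,m_r)) ⊆ H_p^{n+1}(F)`:
(i) the forms `bᵢ·dz` with `z ∈ Ω_F^{n-1}`, and
(ii) the forms `b₁^{k(t,1)}⋯b_r^{k(t,r)}·(dv)^{[p^t]}` with `v ∈ Ω_F^{n-1}`,
`t = 1,…,max(m)−1`, `0 ≤ k(t,i) < p^t` and `max{1, p^{t−mᵢ+1}} ∣ k(t,i)`. -/
def kGens {p : ℕ} {F : Type*} [Field F] (S : DiffStr p F) {r : ℕ}
    (b : Fin r → F) (m : Fin r → ℕ) (n : ℕ) : Set (DF F) :=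
  { x | ∃ i : Fin r, ∃ z ∈ omegaPred F n, x = b i • S.d z } ∪
  { x | ∃ (t : ℕ) (k : Fin r → ℕ), 0 < t ∧ t < Finset.univ.sup m ∧
      (∀ i, k i < p ^ t ∧ p ^ (t + 1 - m i) ∣ k i) ∧
      ∃ v ∈ omegaPred F n, x = (∏ i, b i ^ k i) • spIter S t (S.d v) }

/-- The preimage in `Ω_F^n` of the subgroup `K_F((b₁,m₁),…,(b_r,m_r))` of `H_p^{n+1}(F)`:
the subgroup generated by `℘Ω_F^n + dΩ_F^{n-1}` together with the generators above.
Two subgroups of `H_p^{n+1}(F)` agree iff their preimages agree. -/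
def kGroup {p : ℕ} {F : Type*} [Field F] (S : DiffStr p F) {r : ℕ}
    (b : Fin r → F) (m : Fin r → ℕ) (n : ℕ) : AddSubgroup (DF F) :=
  AddSubgroup.closure ((hRel S n : Set (DF F)) ∪ kGens S b m n)

namespace Lem37

variable {p : ℕ} {F : Type*} [Field F]

lemma dLog_eq (c : F) : dLog F c = c⁻¹ • dForm F c := by
  simp [dLog, dForm, map_smul]

lemma dForm_mem (c : F) :
    dForm F c ∈ LinearMap.range (ExteriorAlgebra.ι F :
      KaehlerDifferential ℤ F →ₗ[F] DF F) := ⟨_, rfl⟩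

lemma dLog_mem (c : F) :
    dLog F c ∈ LinearMap.range (ExteriorAlgebra.ι F :
      KaehlerDifferential ℤ F →ₗ[F] DF F) := ⟨_, rfl⟩

lemma logForm_zero (x : Fin 0 → F) : logForm F x = 1 := by
  simp [logForm]

lemma logForm_succ {n : ℕ} (c : F) (x : Fin n → F) :
    logForm F (Fin.cons c x) = dLog F c * logForm F x := by
  simp [logForm, List.ofFn_succ]

lemma logForm_mem {n : ℕ} (x : Fin n → F) : logForm F x ∈ omegaPow F n := by
  induction n with
  | zero =>
    rw [logForm_zero]
    rw [omegaPow, pow_zero, Submodule.one_eq_span]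
    exact Submodule.mem_span_singleton_self 1
  | succ n ih =>
    have hx : x = Fin.cons (x 0) (fun i => x i.succ) := by
      ext j; exact (Fin.cons_self_tail x ▸ rfl)
    rw [hx, logForm_succ, omegaPow, pow_succ']
    exact Submodule.mul_mem_mul (dLog_mem _) (ih _)

lemma omegaPow_eq_span (n : ℕ) :
    omegaPow F n = Submodule.span F (Set.range (logForm F (n := n))) := by
  refine le_antisymm ?_ (Submodule.span_le.2 ?_)
  · induction n with
    | zero =>
      rw [omegaPow, pow_zero, Submodule.one_eq_span, Submodule.span_le]
      rintro y hy
      rw [Set.mem_singleton_iff] at hy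
      subst hy
      exact Submodule.subset_span ⟨fun i => 1, logForm_zero _⟩
    | succ n ih =>
      rw [omegaPow, pow_succ']
      have h1 : LinearMap.range (ExteriorAlgebra.ι F :
          KaehlerDifferential ℤ F →ₗ[F] DF F) ≤
          Submodule.span F (Set.range (dLog F)) := by
        rintro u ⟨y, rfl⟩
        have hy : y ∈ Submodule.span F (Set.range (KaehlerDifferential.D ℤ F)) := by
          rw [KaehlerDifferential.span_range_derivation]; exact Submodule.mem_top
        have : (ExteriorAlgebra.ι F : KaehlerDifferential ℤ F →ₗ[F] DF F) y ∈
            Submodule.map (ExteriorAlgebra.ι F : KaehlerDifferential ℤ F →ₗ[F] DF F)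
              (Submodule.span F (Set.range (KaehlerDifferential.D ℤ F))) :=
          Submodule.mem_map_of_mem hy
        rw [Submodule.map_span] at this
        refine Submodule.span_le.2 ?_ this
        rintro z ⟨w, ⟨a, rfl⟩, rfl⟩
        by_cases ha : a = 0
        · subst ha
          simp only [map_zero]
          exact Submodule.zero_mem _
        · have : (ExteriorAlgebra.ι F : KaehlerDifferential ℤ F →ₗ[F] DF F)
              (KaehlerDifferential.D ℤ F a) = a • dLog F a := by
            rw [dLog_eq, dForm, smul_smul, mul_inv_cancel₀ ha, one_smul]
          rw [this]
          exact Submodule.smul_mem _ _ (Submodule.subset_span ⟨a, rfl⟩)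
      calc LinearMap.range (ExteriorAlgebra.ι F :
            KaehlerDifferential ℤ F →ₗ[F] DF F) *
            (LinearMap.range (ExteriorAlgebra.ι F :
              KaehlerDifferential ℤ F →ₗ[F] DF F)) ^ n
          ≤ Submodule.span F (Set.range (dLog F)) *
            Submodule.span F (Set.range (logForm F (n := n))) :=
            mul_le_mul' h1 ih
        _ ≤ Submodule.span F (Set.range (logForm F (n := n + 1))) := by
            rw [Submodule.span_mul_span]
            refine Submodule.span_mono ?_
            rintro z hz
            rw [Set.mem_mul] at hz
            obtain ⟨u, ⟨c, rfl⟩, w, ⟨x, rfl⟩, rfl⟩ := hz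
            exact ⟨Fin.cons c x, logForm_succ c x⟩
  · rintro z ⟨x, rfl⟩
    exact logForm_mem x

variable (S : DiffStr p F)

lemma d_mem {n : ℕ} {v : DF F} (hv : v ∈ omegaPred F n) : S.d v ∈ omegaPow F n := by
  cases n with
  | zero =>
    rw [omegaPred, Submodule.mem_bot] at hv
    subst hv
    rw [map_zero]
    exact Submodule.zero_mem _
  | succ n => exact S.d_grade n v hv

lemma sp_mem_pred {n : ℕ} {v : DF F} (hv : v ∈ omegaPred F n) : S.sp v ∈ omegaPred F n := by
  cases n with
  | zero =>
    rw [omegaPred, Submodule.mem_bot] at hv ⊢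
    subst hv
    exact map_zero _
  | succ n => exact S.sp_grade n v hv

lemma spIter_mem {n : ℕ} (t : ℕ) {ω : DF F} (hω : ω ∈ omegaPow F n) :
    spIter S t ω ∈ omegaPow F n := by
  induction t with
  | zero => exact hω
  | succ t ih => rw [spIter, Function.iterate_succ_apply']; exact S.sp_grade n _ ih

lemma spIter_mem_pred {n : ℕ} (t : ℕ) {v : DF F} (hv : v ∈ omegaPred F n) :
    spIter S t v ∈ omegaPred F n := by
  induction t with
  | zero => exact hv
  | succ t ih => rw [spIter, Function.iterate_succ_apply']; exact sp_mem_pred S ih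

lemma spIter_sp {t : ℕ} (x : DF F) : spIter S (t + 1) x = S.sp (spIter S t x) :=
  Function.iterate_succ_apply' _ _ _

lemma spIter_succ (t : ℕ) (x : DF F) : spIter S (t + 1) x = spIter S t (S.sp x) :=
  Function.iterate_succ_apply _ _ _

lemma spIter_add (t : ℕ) (x y : DF F) :
    spIter S t (x + y) = spIter S t x + spIter S t y := by
  induction t generalizing x y with
  | zero => rfl
  | succ t ih => rw [spIter_succ, spIter_succ, spIter_succ, map_add]; exact ih _ _

lemma spIter_sub (t : ℕ) (x y : DF F) :
    spIter S t (x - y) = spIter S t x - spIter S t y := by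
  induction t generalizing x y with
  | zero => rfl
  | succ t ih => rw [spIter_succ, spIter_succ, spIter_succ, map_sub]; exact ih _ _

lemma mul_mem_omega {n : ℕ} (c : F) {w : DF F} (hw : w ∈ omegaPred F n) :
    dForm F c * w ∈ omegaPow F n := by
  cases n with
  | zero =>
    rw [omegaPred, Submodule.mem_bot] at hw
    subst hw
    rw [mul_zero]
    exact Submodule.zero_mem _
  | succ n =>
    rw [omegaPow, pow_succ']
    exact Submodule.mul_mem_mul (dForm_mem c) hw

variable [CharP F p]

lemma dForm_pow_p (a : F) : dForm F (a ^ p) = 0 := by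
  rw [dForm, Derivation.leibniz_pow]
  rw [← Nat.cast_smul_eq_nsmul F p, CharP.cast_eq_zero, zero_smul, map_zero]

lemma d_pow_smul (a : F) (z : DF F) : S.d (a ^ p • z) = a ^ p • S.d z := by
  rw [S.d_smul, dForm_pow_p, zero_mul, zero_add]

end Lem37
namespace Lem37

variable {p : ℕ} {F : Type*} [Field F] (S : DiffStr p F)

lemma asMap_apply (x : DF F) : asMap S x = S.sp x - x := rfl

lemma mem_hRel_wp {n : ℕ} {ω : DF F} (hω : ω ∈ omegaPow F n) :
    S.sp ω - ω ∈ hRel S n := by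
  refine AddSubgroup.mem_sup_left ?_
  exact ⟨ω, hω, rfl⟩

lemma mem_hRel_d {n : ℕ} {z : DF F} (hz : z ∈ omegaPred F n) :
    S.d z ∈ hRel S n := by
  refine AddSubgroup.mem_sup_right ?_
  exact ⟨z, hz, rfl⟩

lemma hRel_le_kGroup {n r : ℕ} {b : Fin r → F} {m : Fin r → ℕ} {x : DF F}
    (hx : x ∈ hRel S n) : x ∈ kGroup S b m n :=
  AddSubgroup.subset_closure (Or.inl hx)

lemma gens_le_kGroup {n r : ℕ} {b : Fin r → F} {m : Fin r → ℕ} {x : DF F}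
    (hx : x ∈ kGens S b m n) : x ∈ kGroup S b m n :=
  AddSubgroup.subset_closure (Or.inr hx)

/-- d (dForm c * η) = - dForm c * d η -/
lemma d_dForm_mul (c : F) (η : DF F) :
    S.d (dForm F c * η) = -(dForm F c * S.d η) := by
  have h1 : dForm F c * η = S.d (c • η) - c • S.d η := by
    rw [S.d_smul]; abel
  have h2 := congrArg S.d h1
  rw [map_sub, S.d_d, S.d_smul, zero_sub, neg_add] at h2
  rw [h2, S.d_d, smul_zero, neg_zero, add_zero]

lemma dForm_mul_self_mul (c : F) (η : DF F) :
    dForm F c * (dForm F c * η) = 0 := by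
  rw [← mul_assoc, dForm, ExteriorAlgebra.ι_sq_zero, zero_mul]

/-- `c^{p-1} • d (dForm c * η) = d (c^{p-1} • (dForm c * η))`, hence
`c^{p-1} • (dForm c * d η)` is exact. -/
lemma smul_dForm_mul_d (c : F) (η : DF F) :
    c ^ (p - 1) • (dForm F c * S.d η) = -S.d (c ^ (p - 1) • (dForm F c * η)) := by
  have h0 : dForm F (c ^ (p - 1)) * (dForm F c * η) = 0 := by
    rw [dForm, Derivation.leibniz_pow, ← Nat.cast_smul_eq_nsmul F (p-1), map_smul, map_smul,
      smul_mul_assoc, smul_mul_assoc]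
    rw [show (ExteriorAlgebra.ι F) ((KaehlerDifferential.D ℤ F) c) = dForm F c from rfl,
      dForm_mul_self_mul, smul_zero, smul_zero]
  rw [S.d_smul, h0, zero_add, d_dForm_mul, smul_neg, neg_neg]

variable [CharP F p]

/-- E1: semilinearity of `s_p` modulo exact forms. -/
lemma sp_smul {n : ℕ} {ω : DF F} (hω : ω ∈ omegaPow F n) (a : F) :
    ∃ η ∈ omegaPred F n, S.sp (a • ω) = a ^ p • S.sp ω + S.d η := by
  rw [omegaPow_eq_span] at hω
  induction hω using Submodule.span_induction generalizing a with
  | mem x hx =>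
    obtain ⟨y, rfl⟩ := hx
    obtain ⟨η₁, hη₁, h1⟩ := S.sp_log n a y
    obtain ⟨η₀, hη₀, h0⟩ := S.sp_log n 1 y
    rw [one_smul, one_pow, one_smul] at h0
    refine ⟨η₁ - a ^ p • η₀, Submodule.sub_mem _ hη₁ (Submodule.smul_mem _ _ hη₀), ?_⟩
    rw [h1, h0, map_sub, d_pow_smul, smul_add]
    abel
  | zero =>
    exact ⟨0, Submodule.zero_mem _, by rw [smul_zero, map_zero, smul_zero, map_zero, add_zero]⟩
  | add x y hx hy ihx ihy =>
    obtain ⟨η₁, hη₁, h1⟩ := ihx a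
    obtain ⟨η₂, hη₂, h2⟩ := ihy a
    refine ⟨η₁ + η₂, Submodule.add_mem _ hη₁ hη₂, ?_⟩
    rw [smul_add, map_add, h1, h2, map_add, map_add, smul_add]
    abel
  | smul c x hx ih =>
    obtain ⟨η₁, hη₁, h1⟩ := ih (a * c)
    obtain ⟨η₂, hη₂, h2⟩ := ih c
    refine ⟨η₁ - a ^ p • η₂, Submodule.sub_mem _ hη₁ (Submodule.smul_mem _ _ hη₂), ?_⟩
    rw [smul_smul, h1, h2, smul_add, smul_smul, ← mul_pow, map_sub, d_pow_smul]
    abel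

end Lem37
namespace Lem37

variable {p : ℕ} {F : Type*} [Field F] (S : DiffStr p F)

lemma dForm_mul_logForm {n : ℕ} {c : F} (hc : c ≠ 0) (x : Fin n → F) :
    dForm F c * logForm F x = c • logForm F (Fin.cons c x) := by
  rw [logForm_succ, dLog_eq, smul_mul_assoc, smul_smul, mul_inv_cancel₀ hc, one_smul]

lemma smul_dForm_mul_d' (c : F) (η : DF F) :
    S.d (c ^ (p - 1) • (dForm F c * η)) = -(c ^ (p - 1) • (dForm F c * S.d η)) := by
  rw [smul_dForm_mul_d, neg_neg]

variable [CharP F p]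

/-- E2. -/
lemma sp_dForm_mul (hp : p ≠ 0) {n : ℕ} {c : F} (hc : c ≠ 0) {w : DF F}
    (hw : w ∈ omegaPred F n) :
    ∃ η ∈ omegaPred F n,
      S.sp (dForm F c * w) = c ^ (p - 1) • (dForm F c * S.sp w) + S.d η := by
  have hp1 : p - 1 + 1 = p := Nat.succ_pred_eq_of_pos (Nat.pos_of_ne_zero hp)
  cases n with
  | zero =>
    rw [omegaPred, Submodule.mem_bot] at hw
    subst hw
    exact ⟨0, Submodule.zero_mem _, by simp⟩
  | succ n' =>
    rw [show omegaPred F (n' + 1) = omegaPow F n' from rfl, omegaPow_eq_span] at hw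
    induction hw using Submodule.span_induction with
    | mem x hx =>
      obtain ⟨y, rfl⟩ := hx
      obtain ⟨η₁, hη₁, h1⟩ := S.sp_log (n' + 1) c (Fin.cons c y)
      obtain ⟨η₂, hη₂, h2⟩ := S.sp_log n' 1 y
      rw [one_smul, one_pow, one_smul] at h2
      refine ⟨η₁ + c ^ (p - 1) • (dForm F c * η₂),
        Submodule.add_mem _ hη₁
          (Submodule.smul_mem _ _ (mul_mem_omega (n := n') c hη₂)), ?_⟩
      have hc1 : c ^ p = c ^ (p - 1) * c := by rw [← pow_succ, hp1]
      rw [dForm_mul_logForm hc, h1, h2, map_add, smul_dForm_mul_d', mul_add,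
        dForm_mul_logForm hc, hc1]
      module
    | zero =>
      exact ⟨0, Submodule.zero_mem _, by simp⟩
    | add x y hx hy ihx ihy =>
      obtain ⟨η₁, hη₁, h1⟩ := ihx
      obtain ⟨η₂, hη₂, h2⟩ := ihy
      refine ⟨η₁ + η₂, Submodule.add_mem _ hη₁ hη₂, ?_⟩
      rw [mul_add, map_add, h1, h2, map_add, mul_add, smul_add, map_add]
      abel
    | smul a x hx ih =>
      have hxo : x ∈ omegaPow F n' := by rw [omegaPow_eq_span]; exact hx
      obtain ⟨η_Q, hη_Q, hQ⟩ := ih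
      obtain ⟨η₃, hη₃, h3⟩ := sp_smul S (n := n' + 1) (mul_mem_omega (n := n' + 1) c hxo) a
      obtain ⟨η₄, hη₄, h4⟩ := sp_smul S (n := n') hxo a
      refine ⟨c ^ (p - 1) • (dForm F c * η₄) + a ^ p • η_Q + η₃,
        Submodule.add_mem _ (Submodule.add_mem _
          (Submodule.smul_mem _ _ (mul_mem_omega (n := n') c hη₄))
          (Submodule.smul_mem _ _ hη_Q)) hη₃, ?_⟩
      have e1 : dForm F c * (a • x) = a • (dForm F c * x) := by rw [mul_smul_comm]
      rw [e1, h3, hQ, h4, map_add, map_add, smul_dForm_mul_d', d_pow_smul, mul_add,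
        mul_smul_comm]
      module

end Lem37
namespace Lem37

variable {p : ℕ} {F : Type*} [Field F] (S : DiffStr p F)

/-- Correction terms: subgroup generated by `c^e • s_p^u (d η)` with `p^u ∣ e`, `u < t`. -/
def corSub (c : F) (t n : ℕ) : AddSubgroup (DF F) :=
  AddSubgroup.closure
    {x | ∃ u, u < t ∧ ∃ e : ℕ, p ^ u ∣ e ∧ ∃ η ∈ omegaPred F n, x = c ^ e • spIter S u (S.d η)}

lemma corSub_mono {c : F} {n : ℕ} {t t' : ℕ} (h : t ≤ t') :
    corSub S c t n ≤ corSub S c t' n := by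
  apply AddSubgroup.closure_mono
  rintro x ⟨u, hu, e, he, η, hη, rfl⟩
  exact ⟨u, lt_of_lt_of_le hu h, e, he, η, hη, rfl⟩

lemma smul_mem_corSub {c : F} {n t : ℕ} {E : ℕ} (hE : p ^ t ∣ E) {x : DF F}
    (hx : x ∈ corSub S c t n) : c ^ E • x ∈ corSub S c t n := by
  induction hx using AddSubgroup.closure_induction with
  | mem x hx =>
    obtain ⟨u, hu, e, he, η, hη, rfl⟩ := hx
    apply AddSubgroup.subset_closure
    refine ⟨u, hu, E + e, dvd_add (dvd_trans (pow_dvd_pow p hu.le) hE) he, η, hη, ?_⟩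
    rw [smul_smul, ← pow_add]
  | zero => rw [smul_zero]; exact AddSubgroup.zero_mem _
  | add x y hx hy ihx ihy => rw [smul_add]; exact AddSubgroup.add_mem _ ihx ihy
  | neg x hx ih => rw [smul_neg]; exact AddSubgroup.neg_mem _ ih

lemma mem_corSub_of_base {c : F} {n t u : ℕ} (hu : u < t) {η : DF F}
    (hη : η ∈ omegaPred F n) : spIter S u (S.d η) ∈ corSub S c t n := by
  apply AddSubgroup.subset_closure
  exact ⟨u, hu, 0, dvd_zero _, η, hη, by rw [pow_zero, one_smul]⟩

variable [CharP F p]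

/-- L3: iterated semilinearity of `s_p` modulo correction terms. -/
lemma spIter_smul {n : ℕ} (c : F) (t : ℕ) (a : F) {ω : DF F} (hω : ω ∈ omegaPow F n) :
    ∃ rr ∈ corSub S c t n, spIter S t (a • ω) = a ^ p ^ t • spIter S t ω + rr := by
  induction t generalizing a ω with
  | zero =>
    exact ⟨0, AddSubgroup.zero_mem _, by rw [pow_zero, pow_one, add_zero]; rfl⟩
  | succ t ih =>
    obtain ⟨η, hη, h1⟩ := sp_smul S hω a
    obtain ⟨rr, hrr, h2⟩ := ih (a ^ p) (S.sp_grade n ω hω)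
    refine ⟨rr + spIter S t (S.d η),
      AddSubgroup.add_mem _ (corSub_mono S (Nat.le_succ t) hrr)
        (mem_corSub_of_base S (Nat.lt_succ_self t) hη), ?_⟩
    rw [spIter_succ, h1, spIter_add, h2, ← pow_mul, ← pow_succ', ← spIter_succ]
    abel

/-- L9: iterated twisting of `s_p` past a logarithmic factor. -/
lemma spIter_dForm_mul (hp : p ≠ 0) {n : ℕ} {c : F} (hc : c ≠ 0) (t : ℕ) {w : DF F}
    (hw : w ∈ omegaPred F n) :
    ∃ rr ∈ corSub S c t n,
      spIter S t (dForm F c * w) = c ^ (p ^ t - 1) • (dForm F c * spIter S t w) + rr := by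
  induction t generalizing w with
  | zero =>
    refine ⟨0, AddSubgroup.zero_mem _, ?_⟩
    norm_num [spIter]
  | succ t ih =>
    obtain ⟨η, hη, h1⟩ := sp_dForm_mul S hp hc hw
    obtain ⟨r₁, hr₁, h2⟩ := spIter_smul S c t (c ^ (p - 1))
      (mul_mem_omega (n := n) c (sp_mem_pred S hw))
    obtain ⟨r₂, hr₂, h3⟩ := ih (sp_mem_pred S hw)
    have hexp : (p - 1) * p ^ t + (p ^ t - 1) = p ^ (t + 1) - 1 := by
      have h1t : 1 ≤ p ^ t := Nat.one_le_pow _ _ (Nat.pos_of_ne_zero hp)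
      have h2t : p ^ (t + 1) = p * p ^ t := pow_succ' p t
      have h3t : p ^ t ≤ p ^ (t + 1) := Nat.pow_le_pow_right (Nat.pos_of_ne_zero hp)
        (Nat.le_succ t)
      rw [Nat.sub_mul, one_mul, h2t]
      omega
    refine ⟨c ^ ((p - 1) * p ^ t) • r₂ + r₁ + spIter S t (S.d η), ?_, ?_⟩
    · refine AddSubgroup.add_mem _ (AddSubgroup.add_mem _ ?_ ?_) ?_
      · exact corSub_mono S (Nat.le_succ t)
          (smul_mem_corSub S (dvd_mul_left (p ^ t) (p - 1)) hr₂)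
      · exact corSub_mono S (Nat.le_succ t) hr₁
      · exact mem_corSub_of_base S (Nat.lt_succ_self t) hη
    · rw [spIter_succ, h1, spIter_add, h2, h3, smul_add, smul_smul, ← pow_mul, ← pow_add,
        hexp, ← spIter_succ]
      abel

end Lem37
namespace Lem37

variable {p : ℕ} {F : Type*} [Field F] (S : DiffStr p F)

lemma gen1_mem {n r : ℕ} {b : Fin r → F} {m : Fin r → ℕ} (i : Fin r) {z : DF F}
    (hz : z ∈ omegaPred F n) : b i • S.d z ∈ kGroup S b m n :=
  gens_le_kGroup S (Or.inl ⟨i, z, hz, rfl⟩)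

/-- LME: closure of the property `∀ z, c • dz ∈ K` under multiplication. -/
lemma d_smul_mul {n r : ℕ} {b : Fin r → F} {m : Fin r → ℕ} {c₁ c₂ : F}
    (h₁ : ∀ z ∈ omegaPred F n, c₁ • S.d z ∈ kGroup S b m n)
    (h₂ : ∀ z ∈ omegaPred F n, c₂ • S.d z ∈ kGroup S b m n) :
    ∀ z ∈ omegaPred F n, (c₁ * c₂) • S.d z ∈ kGroup S b m n := by
  intro z hz
  have hd : S.d ((c₁ * c₂) • z) =
      c₂ • (S.d (c₁ • z) - c₁ • S.d z) + c₁ • S.d (c₂ • z) := by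
    rw [mul_smul, S.d_smul, mul_smul_comm,
      show dForm F c₁ * z = S.d (c₁ • z) - c₁ • S.d z from by rw [S.d_smul]; abel]
  have key : (c₁ * c₂) • S.d z =
      c₂ • S.d (c₁ • z) + c₁ • S.d (c₂ • z) - S.d ((c₁ * c₂) • z) := by
    rw [hd, smul_sub, smul_smul, mul_comm c₂ c₁]
    abel
  rw [key]
  exact AddSubgroup.sub_mem _
    (AddSubgroup.add_mem _ (h₂ (c₁ • z) (Submodule.smul_mem _ _ hz))
      (h₁ (c₂ • z) (Submodule.smul_mem _ _ hz)))
    (hRel_le_kGroup S (mem_hRel_d S (Submodule.smul_mem _ _ hz)))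

/-- Any monomial in the `b j` times an exact form lies in `K`. -/
lemma prod_pow_d_smul_mem {n r : ℕ} {b : Fin r → F} {m : Fin r → ℕ} (g : Fin r → ℕ) :
    ∀ z ∈ omegaPred F n, (∏ j, b j ^ g j) • S.d z ∈ kGroup S b m n := by
  refine Finset.prod_induction (fun j => b j ^ g j)
    (fun c => ∀ z ∈ omegaPred F n, c • S.d z ∈ kGroup S b m n)
    (fun c₁ c₂ h1 h2 => d_smul_mul S h1 h2) ?_ ?_
  · intro z hz
    rw [one_smul]
    exact hRel_le_kGroup S (mem_hRel_d S hz)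
  · intro j _
    show ∀ z ∈ omegaPred F n, b j ^ g j • S.d z ∈ kGroup S b m n
    generalize g j = k
    induction k with
    | zero =>
      intro z hz
      rw [pow_zero, one_smul]
      exact hRel_le_kGroup S (mem_hRel_d S hz)
    | succ k ihk =>
      rw [pow_succ]
      exact d_smul_mul S ihk (fun z hz => gen1_mem S j hz)

lemma prod_mul_pow {r : ℕ} (b : Fin r → F) (f g : Fin r → ℕ) (K : ℕ) :
    (∏ j, b j ^ f j) * (∏ j, b j ^ g j) ^ K = ∏ j, b j ^ (f j + g j * K) := by
  rw [← Finset.prod_pow, ← Finset.prod_mul_distrib]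
  exact Finset.prod_congr rfl fun j _ => by rw [← pow_mul, ← pow_add]

end Lem37
namespace Lem37

variable {p : ℕ} {F : Type*} [Field F] (S : DiffStr p F) [CharP F p]

/-- MAIN: any `(∏ bⱼ^{eⱼ}) • s_p^t (dv)` with `p^{t+1-mⱼ} ∣ eⱼ` lies in `K`. -/
lemma main {n r : ℕ} (hp : p.Prime) {b : Fin r → F} {m : Fin r → ℕ}
    (hb : ∀ i, b i ≠ 0) (hm : ∀ i, 1 ≤ m i) :
    ∀ t, 1 ≤ t → ∀ e : Fin r → ℕ, (∀ j, p ^ (t + 1 - m j) ∣ e j) →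
      ∀ v ∈ omegaPred F n, (∏ j, b j ^ e j) • spIter S t (S.d v) ∈ kGroup S b m n := by
  have hppos : 0 < p := hp.pos
  have hp0 : p ≠ 0 := hp.ne_zero
  intro t
  induction t using Nat.strong_induction_on with
  | _ t IH =>
  intro ht e he v hv
  have hptpos : 0 < p ^ t := pow_pos hppos t
  -- decomposition of the exponents
  set q : Fin r → ℕ := fun j => e j / p ^ t with hq_def
  set l : Fin r → ℕ := fun j => e j % p ^ t with hl_def
  have hl_lt : ∀ j, l j < p ^ t := fun j => Nat.mod_lt _ hptpos
  have hl_dvd : ∀ j, p ^ (t + 1 - m j) ∣ l j := by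
    intro j
    have h1 : p ^ (t + 1 - m j) ∣ p ^ t := pow_dvd_pow p (by have := hm j; omega)
    exact (Nat.dvd_mod_iff h1).2 (he j)
  set Q : F := ∏ j, b j ^ q j with hQ_def
  set L : F := ∏ j, b j ^ l j with hL_def
  have hQ0 : Q ≠ 0 := Finset.prod_ne_zero_iff.2 fun j _ => pow_ne_zero _ (hb j)
  have hprod : (∏ j, b j ^ e j) = L * Q ^ p ^ t := by
    rw [hL_def, hQ_def, prod_mul_pow]
    exact Finset.prod_congr rfl fun j _ => by rw [hl_def, hq_def, Nat.mod_add_div']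
  have hdv : S.d v ∈ omegaPow F n := d_mem S hv
  set W : DF F := spIter S t v with hW_def
  have hW : W ∈ omegaPred F n := spIter_mem_pred S t hv
  have hQv : Q • v ∈ omegaPred F n := Submodule.smul_mem _ _ hv
  have hQW : Q • W ∈ omegaPred F n := Submodule.smul_mem _ _ hW
  obtain ⟨rr, hrr, h2⟩ := spIter_smul S Q t Q hdv
  obtain ⟨rr₂, hrr₂, h5⟩ := spIter_dForm_mul S hp0 hQ0 t hv
  -- the subgroup we work in
  -- membership of the correction terms
  have hcor : ∀ x ∈ corSub S Q t n, L • x ∈ kGroup S b m n := by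
    intro x hx
    induction hx using AddSubgroup.closure_induction with
    | mem x hx =>
      obtain ⟨u, hu, e', he', η, hη, rfl⟩ := hx
      rw [smul_smul, hL_def, hQ_def, prod_mul_pow]
      rcases Nat.eq_zero_or_pos u with hu0 | hu1
      · subst hu0
        exact prod_pow_d_smul_mem S _ η hη
      · refine IH u hu hu1 _ (fun j => ?_) η hη
        refine dvd_add (dvd_trans (pow_dvd_pow p (by omega)) (hl_dvd j))
          (Dvd.dvd.mul_left (dvd_trans (pow_dvd_pow p (by have := hm j; omega)) he') _)
    | zero => rw [smul_zero]; exact AddSubgroup.zero_mem _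
    | add x y hx hy ihx ihy => rw [smul_add]; exact AddSubgroup.add_mem _ ihx ihy
    | neg x hx ih => rw [smul_neg]; exact AddSubgroup.neg_mem _ ih
  -- membership of the two `monomial • exact` terms
  have hB1 : (L * Q ^ (p ^ t - 1)) • S.d (Q • W) ∈ kGroup S b m n := by
    rw [hL_def, hQ_def, prod_mul_pow]
    exact prod_pow_d_smul_mem S _ _ hQW
  have hB2 : (L * Q ^ (p ^ t - 1) * Q) • S.d W ∈ kGroup S b m n := by
    have : L * Q ^ (p ^ t - 1) * Q = ∏ j, b j ^ (l j + q j * (p ^ t - 1) + q j * 1) := by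
      rw [hL_def, hQ_def, prod_mul_pow,
        show (∏ j, b j ^ q j) = (∏ j, b j ^ q j) ^ 1 from (pow_one _).symm, prod_mul_pow]
    rw [this]
    exact prod_pow_d_smul_mem S _ _ hW
  -- membership of the head term
  have hA : L • spIter S t (S.d (Q • v)) ∈ kGroup S b m n := by
    by_cases hM : t < Finset.univ.sup m
    · refine gens_le_kGroup S (Or.inr ⟨t, l, ht, hM, fun j => ⟨hl_lt j, hl_dvd j⟩,
        Q • v, hQv, rfl⟩)
    · push_neg at hM
      have hmt : ∀ j, m j ≤ t := fun j => le_trans (Finset.le_sup (Finset.mem_univ j)) hM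
      have hpl : ∀ j, p ∣ l j := by
        intro j
        exact dvd_trans (dvd_pow_self p (by have := hmt j; omega)) (hl_dvd j)
      set B : F := ∏ j, b j ^ (l j / p) with hB_def
      have hBp : B ^ p = L := by
        rw [hB_def, hL_def, ← Finset.prod_pow]
        exact Finset.prod_congr rfl fun j _ => by
          rw [← pow_mul, Nat.div_mul_cancel (hpl j)]
      obtain ⟨t', rfl⟩ : ∃ t', t = t' + 1 := ⟨t - 1, by omega⟩
      set X : DF F := spIter S t' (S.d (Q • v)) with hX_def
      have hX : X ∈ omegaPow F n := spIter_mem S t' (d_mem S hQv)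
      obtain ⟨η₅, hη₅, h7⟩ := sp_smul S hX B
      have key : L • spIter S (t' + 1) (S.d (Q • v)) =
          (S.sp (B • X) - B • X) + B • X - S.d η₅ := by
        rw [h7, spIter_sp, ← hX_def, hBp]
        abel
      rw [key]
      refine AddSubgroup.sub_mem _ (AddSubgroup.add_mem _ ?_ ?_) ?_
      · exact hRel_le_kGroup S (mem_hRel_wp S (Submodule.smul_mem _ _ hX))
      · rcases Nat.eq_zero_or_pos t' with ht0 | ht1
        · subst ht0
          rw [hB_def]
          exact prod_pow_d_smul_mem S _ _ hQv
        · rw [hB_def, hX_def]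
          refine IH t' (Nat.lt_succ_self t') ht1 _ (fun j => ?_) _ hQv
          have h8 : p * p ^ (t' + 1 - m j) ∣ l j := by
            have : p * p ^ (t' + 1 - m j) = p ^ (t' + 1 + 1 - m j) := by
              rw [← pow_succ']
              congr 1
              have := hmt j
              omega
            rw [this]
            exact hl_dvd j
          exact (Nat.dvd_div_iff_mul_dvd (hpl j)).2 h8
      · exact hRel_le_kGroup S (mem_hRel_d S hη₅)
  -- assemble
  have hx : (∏ j, b j ^ e j) • spIter S (t) (S.d v) =
      L • spIter S t (S.d (Q • v))
        - ((L * Q ^ (p ^ t - 1)) • S.d (Q • W)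
            - (L * Q ^ (p ^ t - 1) * Q) • S.d W + L • rr₂)
        - L • rr := by
    have e_dv : Q • S.d v = S.d (Q • v) - dForm F Q * v := by
      rw [S.d_smul]; abel
    have h4 : spIter S t (Q • S.d v) =
        spIter S t (S.d (Q • v)) - spIter S t (dForm F Q * v) := by
      rw [e_dv, spIter_sub]
    have h6 : dForm F Q * W = S.d (Q • W) - Q • S.d W := by
      rw [S.d_smul]; abel
    rw [hprod, mul_smul, show Q ^ p ^ t • spIter S t (S.d v) = spIter S t (Q • S.d v) - rr
        from by rw [h2]; abel,
      h4, h5, ← hW_def, h6]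
    module
  rw [hx]
  exact AddSubgroup.sub_mem _
    (AddSubgroup.sub_mem _ hA
      (AddSubgroup.add_mem _ (AddSubgroup.sub_mem _ hB1 hB2) (hcor rr₂ hrr₂)))
    (hcor rr hrr)

end Lem37
namespace Lem37

variable {p : ℕ} {F : Type*} [Field F] (S : DiffStr p F)

lemma sup_comp_perm {r : ℕ} (m : Fin r → ℕ) (σ : Equiv.Perm (Fin r)) :
    Finset.univ.sup (m ∘ σ) = Finset.univ.sup m := by
  rw [← Finset.sup_image, Finset.image_univ_of_surjective σ.surjective]

lemma kGens_perm_subset {n r : ℕ} (b : Fin r → F) (m : Fin r → ℕ) (σ : Equiv.Perm (Fin r)) :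
    kGens S (b ∘ σ) (m ∘ σ) n ⊆ kGens S b m n := by
  rintro x (⟨i, z, hz, rfl⟩ | ⟨t, k, ht, hMt, hcond, v, hv, rfl⟩)
  · exact Or.inl ⟨σ i, z, hz, rfl⟩
  · refine Or.inr ⟨t, k ∘ σ.symm, ht, by rwa [sup_comp_perm] at hMt, fun j => ?_, v, hv, ?_⟩
    · refine ⟨(hcond (σ.symm j)).1, ?_⟩
      have := (hcond (σ.symm j)).2
      simpa [Function.comp, Equiv.apply_symm_apply] using this
    · congr 1
      rw [← Equiv.prod_comp σ (fun j => b j ^ (k ∘ σ.symm) j)]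
      exact Finset.prod_congr rfl fun j _ => by simp [Function.comp]

lemma kGroup_perm_le {n r : ℕ} (b : Fin r → F) (m : Fin r → ℕ) (σ : Equiv.Perm (Fin r)) :
    kGroup S (b ∘ σ) (m ∘ σ) n ≤ kGroup S b m n := by
  rw [kGroup, AddSubgroup.closure_le]
  rintro x (hx | hx)
  · exact hRel_le_kGroup S hx
  · exact gens_le_kGroup S (kGens_perm_subset S b m σ hx)

lemma kGroup_perm_eq {n r : ℕ} (b : Fin r → F) (m : Fin r → ℕ) (σ : Equiv.Perm (Fin r)) :
    kGroup S (b ∘ σ) (m ∘ σ) n = kGroup S b m n := by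
  refine le_antisymm (kGroup_perm_le S b m σ) ?_
  have h1 : b = (b ∘ σ) ∘ σ.symm := by
    funext j; simp [Function.comp]
  have h2 : m = (m ∘ σ) ∘ σ.symm := by
    funext j; simp [Function.comp]
  conv_lhs => rw [h1, h2]
  exact kGroup_perm_le S (b ∘ σ) (m ∘ σ) σ.symm

end Lem37
namespace Lem37

variable {p : ℕ} {F : Type*} [Field F] (S : DiffStr p F) [CharP F p]

lemma kGroup_update_le {n r : ℕ} (hp : p.Prime) (b : Fin r → F) (m : Fin r → ℕ)
    (hb : ∀ i, b i ≠ 0) (hm : ∀ i, 1 ≤ m i) (i : Fin r) :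
    kGroup S (Function.update b i (b i ^ p)) (Function.update m i (m i + 1)) n ≤
      kGroup S b m n := by
  set b' := Function.update b i (b i ^ p) with hb'_def
  set m' := Function.update m i (m i + 1) with hm'_def
  rw [kGroup, AddSubgroup.closure_le]
  rintro x (hx | hx)
  · exact hRel_le_kGroup S hx
  rcases hx with ⟨j, z, hz, rfl⟩ | ⟨t, k, ht, hMt, hcond, v, hv, rfl⟩
  · by_cases hji : j = i
    · subst hji
      rw [hb'_def, Function.update_self, ← d_pow_smul]
      exact hRel_le_kGroup S (mem_hRel_d S (Submodule.smul_mem _ _ hz))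
    · rw [hb'_def, Function.update_of_ne hji]
      exact gen1_mem S j hz
  · have hprod : (∏ j, b' j ^ k j) =
        ∏ j, b j ^ (if j = i then p * k i else k j) := by
      refine Finset.prod_congr rfl fun j _ => ?_
      by_cases hji : j = i
      · subst hji
        rw [if_pos rfl, hb'_def, Function.update_self, ← pow_mul]
      · rw [if_neg hji, hb'_def, Function.update_of_ne hji]
    rw [hprod]
    refine main S hp hb hm t ht _ (fun j => ?_) v hv
    by_cases hji : j = i
    · subst hji
      rw [if_pos rfl]
      have h1 := (hcond j).2
      rw [hm'_def, Function.update_self] at h1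
      rcases le_or_gt (m j) t with hmt | hmt
      · have e1 : t + 1 - (m j + 1) = t - m j := by omega
        have e2 : t + 1 - m j = t - m j + 1 := by omega
        rw [e1] at h1
        rw [e2, pow_succ']
        exact mul_dvd_mul_left p h1
      · rw [Nat.sub_eq_zero_of_le (by omega), pow_zero]
        exact one_dvd _
    · rw [if_neg hji]
      have h1 := (hcond j).2
      rwa [hm'_def, Function.update_of_ne hji] at h1

lemma kGroup_le_update {n r : ℕ} (hp : p.Prime) (b : Fin r → F) (m : Fin r → ℕ)
    (hb : ∀ i, b i ≠ 0) (hm : ∀ i, 1 ≤ m i) (i : Fin r) :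
    kGroup S b m n ≤
      kGroup S (Function.update b i (b i ^ p)) (Function.update m i (m i + 1)) n := by
  set b' := Function.update b i (b i ^ p) with hb'_def
  set m' := Function.update m i (m i + 1) with hm'_def
  have hb' : ∀ j, b' j ≠ 0 := by
    intro j
    by_cases hji : j = i
    · subst hji; rw [hb'_def, Function.update_self]; exact pow_ne_zero _ (hb _)
    · rw [hb'_def, Function.update_of_ne hji]; exact hb j
  have hm' : ∀ j, 1 ≤ m' j := by
    intro j
    by_cases hji : j = i
    · subst hji; rw [hm'_def, Function.update_self]; omega
    · rw [hm'_def, Function.update_of_ne hji]; exact hm j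
  rw [kGroup, AddSubgroup.closure_le]
  rintro x (hx | hx)
  · exact hRel_le_kGroup S hx
  rcases hx with ⟨j, z, hz, rfl⟩ | ⟨t, k, ht, hMt, hcond, v, hv, rfl⟩
  · by_cases hji : j = i
    · subst hji
      have hdz : S.d z ∈ omegaPow F n := d_mem S hz
      obtain ⟨η, hη, h⟩ := sp_smul S hdz (b j)
      have key : b j • S.d z =
          b j ^ p • S.sp (S.d z) + S.d η - (S.sp (b j • S.d z) - b j • S.d z) := by
        rw [h]; abel
      rw [key]
      refine AddSubgroup.sub_mem _ (AddSubgroup.add_mem _ ?_ ?_) ?_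
      · have hcoef : (∏ j', b' j' ^ (if j' = j then 1 else 0)) = b j ^ p := by
          rw [Finset.prod_eq_single j (fun j' _ hj' => by rw [if_neg hj', pow_zero])
            (fun h => absurd (Finset.mem_univ j) h)]
          rw [if_pos rfl, pow_one, hb'_def, Function.update_self]
        have hiter : S.sp (S.d z) = spIter S 1 (S.d z) := by
          rw [spIter, Function.iterate_one]
        rw [← hcoef, hiter]
        refine main S hp hb' hm' 1 le_rfl _ (fun j' => ?_) z hz
        by_cases hj' : j' = j
        · subst hj'
          rw [if_pos rfl, hm'_def, Function.update_self,
            Nat.sub_eq_zero_of_le (by have := hm j'; omega), pow_zero]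
        · rw [if_neg hj']
          exact dvd_zero _
      · exact hRel_le_kGroup S (mem_hRel_d S hη)
      · exact hRel_le_kGroup S (mem_hRel_wp S (Submodule.smul_mem _ _ hdz))
    · rw [show b j = b' j from by rw [hb'_def, Function.update_of_ne hji]]
      exact gen1_mem S j hz
  · have hsp : spIter S t (S.d v) ∈ omegaPow F n := spIter_mem S t (d_mem S hv)
    obtain ⟨η, hη, h⟩ := sp_smul S hsp (∏ j, b j ^ k j)
    have h' : S.sp ((∏ j, b j ^ k j) • spIter S t (S.d v)) =
        (∏ j, b j ^ k j) ^ p • spIter S (t + 1) (S.d v) + S.d η := by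
      rw [spIter_sp]; exact h
    have key : (∏ j, b j ^ k j) • spIter S t (S.d v) =
        (∏ j, b j ^ k j) ^ p • spIter S (t + 1) (S.d v) + S.d η
          - (S.sp ((∏ j, b j ^ k j) • spIter S t (S.d v))
              - (∏ j, b j ^ k j) • spIter S t (S.d v)) := by
      rw [h']; abel
    rw [key]
    refine AddSubgroup.sub_mem _ (AddSubgroup.add_mem _ ?_ ?_) ?_
    · have hcoef : (∏ j, b j ^ k j) ^ p =
          ∏ j, b' j ^ (if j = i then k i else p * k j) := by
        rw [← Finset.prod_pow]
        refine Finset.prod_congr rfl fun j _ => ?_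
        by_cases hji : j = i
        · subst hji
          rw [if_pos rfl, hb'_def, Function.update_self, ← pow_mul, ← pow_mul,
            mul_comm (k j) p]
        · rw [if_neg hji, hb'_def, Function.update_of_ne hji, ← pow_mul,
            mul_comm (k j) p]
      rw [hcoef]
      refine main S hp hb' hm' (t + 1) (by omega) _ (fun j => ?_) v hv
      by_cases hji : j = i
      · subst hji
        rw [if_pos rfl, hm'_def, Function.update_self]
        have e1 : t + 1 + 1 - (m j + 1) = t + 1 - m j := by omega
        rw [e1]
        exact (hcond j).2
      · rw [if_neg hji, hm'_def, Function.update_of_ne hji]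
        rcases le_or_gt (m j) (t + 1) with hmt | hmt
        · have e2 : t + 1 + 1 - m j = (t + 1 - m j) + 1 := by omega
          rw [e2, pow_succ']
          exact mul_dvd_mul_left p ((hcond j).2)
        · rw [Nat.sub_eq_zero_of_le (by omega), pow_zero]
          exact one_dvd _
    · exact hRel_le_kGroup S (mem_hRel_d S hη)
    · exact hRel_le_kGroup S (mem_hRel_wp S (Submodule.smul_mem _ _ hsp))

end Lem37

/-- **Lemma 3.7 (377).** For `(b₁,m₁),…,(b_r,m_r) ∈ F^* × ℕ_{>0}`:
(i) `K_F` is invariant under permuting the pairs, and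
(ii) replacing a pair `(bᵢ, mᵢ)` by `(bᵢ^p, mᵢ+1)` does not change `K_F`. -/
theorem kGroup_perm_and_pow
    (p : ℕ) (hp : p.Prime) (F : Type*) [Field F] [CharP F p]
    (S : DiffStr p F) (r : ℕ) (b : Fin r → F) (m : Fin r → ℕ)
    (hb : ∀ i, b i ≠ 0) (hm : ∀ i, 1 ≤ m i) (n : ℕ) :
    (∀ σ : Equiv.Perm (Fin r), kGroup S (b ∘ σ) (m ∘ σ) n = kGroup S b m n) ∧
    (∀ i : Fin r,
      kGroup S (Function.update b i (b i ^ p)) (Function.update m i (m i + 1)) n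
        = kGroup S b m n) := by
  constructor
  · exact fun σ => Lem37.kGroup_perm_eq S b m σ
  · intro i
    exact le_antisymm (Lem37.kGroup_update_le S hp b m hb hm i)
      (Lem37.kGroup_le_update S hp b m hb hm i)
end
end

section
/- Let F be a field of characteristic p > 0 and (b_1,m_1),…,(b_r,m_r) ∈ F^* × ℕ_{>0}. Then: (i) if [F(b_1^{1/p^{m_1}},…,b_r^{1/p^{m_r}}) : F] = p, there exist j ∈ {1,…,r} and c_j ∈ F∖F^p with b_j = c_j^{p^{m_j−1}} and K_F((b_1,m_1),…,(b_r,m_r)) equals the image of c_j·d(Ω_F^{n-1}) in H_p^{n+1}(F); (ii) if max{m_1,…,m_r} = 1, then K_F((b_1,m_1),…,(b_r,m_r)) = Σ_{i=1}^r (image of b_i·d(Ω_F^{n-1}) in H_p^{n+1}(F)). -/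
noncomputable section

section Helpers

open Polynomial

variable {p : ℕ} {F : Type*} [Field F]

lemma asMap_apply (S : DiffStr p F) (w : DF F) : asMap S w = S.sp w - w := rfl

lemma omegaPred_d_mem (S : DiffStr p F) {n : ℕ} {z : DF F} (hz : z ∈ omegaPred F n) :
    S.d z ∈ omegaPow F n := by
  cases n with
  | zero =>
    rw [omegaPred, Submodule.mem_bot] at hz
    subst hz
    simpa using Submodule.zero_mem _
  | succ n => exact S.d_grade n z hz

lemma spIter_zero (S : DiffStr p F) (w : DF F) : spIter S 0 w = w := rfl

lemma spIter_succ (S : DiffStr p F) (t : ℕ) (w : DF F) :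
    spIter S (t + 1) w = S.sp (spIter S t w) := Function.iterate_succ_apply' _ _ _

lemma spIter_mem (S : DiffStr p F) {n : ℕ} {w : DF F} (hw : w ∈ omegaPow F n) (t : ℕ) :
    spIter S t w ∈ omegaPow F n := by
  induction t with
  | zero => simpa [spIter_zero] using hw
  | succ t ih => rw [spIter_succ]; exact S.sp_grade n _ ih

lemma logForm_zero (x : Fin 0 → F) : logForm F x = 1 := by
  simp [logForm]

lemma logForm_succ {n : ℕ} (x : Fin (n + 1) → F) :
    logForm F x = dLog F (x 0) * logForm F (fun i => x i.succ) := by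
  simp [logForm, List.ofFn_succ]

lemma logForm_mem {n : ℕ} (x : Fin n → F) : logForm F x ∈ omegaPow F n := by
  induction n with
  | zero =>
    rw [logForm_zero, omegaPow, pow_zero, Submodule.one_eq_span]
    exact Submodule.mem_span_singleton_self 1
  | succ n ih =>
    rw [logForm_succ, omegaPow, pow_succ']
    exact Submodule.mul_mem_mul ⟨_, rfl⟩ (ih _)

lemma mem_hRel_of (S : DiffStr p F) (n : ℕ) {w ζ ξ : DF F}
    (hζ : ζ ∈ omegaPow F n) (hξ : ξ ∈ omegaPred F n)
    (h : w = asMap S ζ + S.d ξ) : w ∈ hRel S n := by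
  subst h
  exact add_mem (AddSubgroup.mem_sup_left ⟨ζ, hζ, rfl⟩)
    (AddSubgroup.mem_sup_right ⟨ξ, hξ, rfl⟩)

lemma dForm_mul (a c : F) : dForm F (a * c) = a • dForm F c + c • dForm F a := by
  simp [dForm, Derivation.leibniz, map_add]

lemma dForm_natCast_mul (k : ℕ) (a : F) : dForm F ((k : F) * a) = (k : F) • dForm F a := by
  rw [dForm_mul]
  simp [dForm, Derivation.map_natCast]

lemma dForm_pow (a : F) (k : ℕ) : dForm F (a ^ k) = ((k : F) * a ^ (k - 1)) • dForm F a := by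
  simp only [dForm, Derivation.leibniz_pow, map_nsmul, map_smul]
  rw [← Nat.cast_smul_eq_nsmul F, smul_smul]

lemma dForm_frob [CharP F p] (e : F) : dForm F (e ^ p) = 0 := by
  rw [dForm_pow, CharP.cast_eq_zero F p, zero_mul, zero_smul]

lemma d_smul_frob [CharP F p] (S : DiffStr p F) (a : F) (z : DF F) :
    S.d (a ^ p • z) = a ^ p • S.d z := by
  rw [S.d_smul, dForm_frob, zero_mul, zero_add]

lemma iota_mul_span (n : ℕ) {ξ : KaehlerDifferential ℤ F}
    (hξ : ξ ∈ Submodule.span F (Set.range (KaehlerDifferential.D ℤ F))) :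
    ∀ w ∈ Submodule.span F (Set.range (logForm F (n := n))),
      ExteriorAlgebra.ι F ξ * w ∈ Submodule.span F (Set.range (logForm F (n := n + 1))) := by
  induction hξ using Submodule.span_induction with
  | mem ξ' hξ' =>
    obtain ⟨a, rfl⟩ := hξ'
    intro w hw
    induction hw using Submodule.span_induction with
    | mem w'' hw'' =>
      obtain ⟨x, rfl⟩ := hw''
      by_cases ha : a = 0
      · simp [ha]
      · have hrw : ExteriorAlgebra.ι F (KaehlerDifferential.D ℤ F a) = a • dLog F a := by
          rw [dLog, map_smul, smul_smul, mul_inv_cancel₀ ha, one_smul]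
        rw [hrw, smul_mul_assoc]
        refine Submodule.smul_mem _ _ (Submodule.subset_span ⟨Fin.cons a x, ?_⟩)
        rw [logForm_succ]
        simp
    | zero => simpa using Submodule.zero_mem _
    | add u v hu hv ihu ihv => rw [mul_add]; exact Submodule.add_mem _ ihu ihv
    | smul u v hv ihv => rw [mul_smul_comm]; exact Submodule.smul_mem _ _ ihv
  | zero => intro w hw; simpa using Submodule.zero_mem _
  | add u v hu hv ihu ihv =>
    intro w hw
    rw [map_add, add_mul]
    exact Submodule.add_mem _ (ihu w hw) (ihv w hw)
  | smul u v hv ihv =>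
    intro w hw
    rw [map_smul, smul_mul_assoc]
    exact Submodule.smul_mem _ _ (ihv w hw)

lemma omegaPow_le_span (n : ℕ) :
    omegaPow F n ≤ Submodule.span F (Set.range (logForm F (n := n))) := by
  induction n with
  | zero =>
    intro w hw
    rw [omegaPow, pow_zero, Submodule.one_eq_span] at hw
    obtain ⟨y, hy⟩ := Submodule.mem_span_singleton.mp hw
    rw [← hy, ← logForm_zero (fun _ => (1 : F))]
    exact Submodule.smul_mem _ _ (Submodule.subset_span ⟨_, rfl⟩)
  | succ n ih =>
    intro w hw
    rw [omegaPow, pow_succ'] at hw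
    refine Submodule.mul_induction_on hw ?_ (fun x y hx hy => Submodule.add_mem _ hx hy)
    rintro mm ⟨ξ, rfl⟩ w' hw'
    have hξmem : ξ ∈ Submodule.span F (Set.range (KaehlerDifferential.D ℤ F)) := by
      rw [KaehlerDifferential.span_range_derivation]; trivial
    exact iota_mul_span n hξmem w' (ih hw')

lemma key1 [CharP F p] (S : DiffStr p F) (n : ℕ) {w : DF F} (hw : w ∈ omegaPow F n) :
    ∀ u a : F, a ^ p • S.sp (u • w) - (a * u) • w ∈ hRel S n := by
  have hspan := omegaPow_le_span n hw
  clear hw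
  induction hspan using Submodule.span_induction with
  | mem w' hw' =>
    obtain ⟨x, rfl⟩ := hw'
    intro u a
    obtain ⟨η, hη, hsp⟩ := S.sp_log n u x
    obtain ⟨η', hη', hsp'⟩ := S.sp_log n (a * u) x
    refine mem_hRel_of S n (ζ := (a * u) • logForm F x) (ξ := a ^ p • η - η')
      (Submodule.smul_mem _ _ (logForm_mem x)) (sub_mem (Submodule.smul_mem _ _ hη) hη') ?_
    rw [asMap_apply, hsp', map_sub, d_smul_frob]
    rw [hsp]
    simp only [smul_add, smul_smul, mul_pow]
    abel
  | zero => intro u a; simpa using zero_mem (hRel S n)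
  | add y z hy hz ihy ihz =>
    intro u a
    have := add_mem (ihy u a) (ihz u a)
    convert this using 1
    simp only [smul_add, map_add]
    abel
  | smul u₀ y hy ihy =>
    intro u a
    have := ihy (u * u₀) a
    simpa [smul_smul, mul_assoc] using this

lemma key3 [CharP F p] (S : DiffStr p F) (n : ℕ) {w : DF F} (hw : w ∈ omegaPow F n)
    (a : F) (t : ℕ) :
    a ^ p ^ t • spIter S t w - a • w ∈ hRel S n := by
  induction t with
  | zero => simpa [spIter_zero] using zero_mem (hRel S n)
  | succ t ih =>
    have h1 := key1 S n (spIter_mem S hw t) 1 (a ^ p ^ t)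
    have := add_mem h1 ih
    convert this using 1
    rw [spIter_succ]
    simp only [one_smul, mul_one, ← pow_mul, ← pow_succ]
    abel

lemma keyId [CharP F p] (S : DiffStr p F) (c e : F) (s : ℕ) (z : DF F) :
    (e ^ p * c ^ (s + 1)) • S.d z =
      c • S.d (((((s : F) + 1)) * (e ^ p * c ^ s)) • z)
        - S.d (((s : F) * (e ^ p * c ^ (s + 1))) • z) := by
  have hnc : ((s : F) + 1) = ((s + 1 : ℕ) : F) := by push_cast; ring
  have h1 : dForm F ((((s : F) + 1)) * (e ^ p * c ^ s))
      = ((((s : F) + 1)) * ((s : F) * (e ^ p * c ^ (s - 1)))) • dForm F c := by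
    rw [hnc, dForm_natCast_mul, dForm_mul, dForm_pow c s, dForm_frob (p := p) e,
      smul_zero, add_zero, smul_smul, smul_smul, ← hnc]
    congr 1
    ring
  have h2 : dForm F ((s : F) * (e ^ p * c ^ (s + 1)))
      = ((s : F) * (((s : F) + 1) * (e ^ p * c ^ s))) • dForm F c := by
    rw [dForm_natCast_mul, dForm_mul, dForm_pow c (s + 1), dForm_frob (p := p) e,
      smul_zero, add_zero, smul_smul, smul_smul]
    congr 1
    push_cast [Nat.add_sub_cancel]
    ring
  have hcoef : c * ((((s : F) + 1)) * ((s : F) * (e ^ p * c ^ (s - 1))))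
      = (s : F) * (((s : F) + 1) * (e ^ p * c ^ s)) := by
    cases s with
    | zero => simp
    | succ s' =>
      have hcc : c * c ^ (s' + 1 - 1) = c ^ (s' + 1) := by
        rw [Nat.add_sub_cancel, pow_succ]; ring
      calc c * ((((s' + 1 : ℕ) : F) + 1) * (((s' + 1 : ℕ) : F) * (e ^ p * c ^ (s' + 1 - 1))))
          = (((s' + 1 : ℕ) : F) + 1) * (((s' + 1 : ℕ) : F) * (e ^ p * (c * c ^ (s' + 1 - 1)))) := by
            ring
        _ = ((s' + 1 : ℕ) : F) * ((((s' + 1 : ℕ) : F) + 1) * (e ^ p * c ^ (s' + 1))) := by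
            rw [hcc]; ring
  have hc2 : c * (((s : F) + 1) * (e ^ p * c ^ s)) = ((s : F) + 1) * (e ^ p * c ^ (s + 1)) := by
    rw [pow_succ]; ring
  rw [S.d_smul, S.d_smul, h1, h2, smul_mul_assoc, smul_mul_assoc, smul_add, smul_smul,
    smul_smul, hcoef, hc2]
  module

lemma Tc_mem_one (c : F) :
    (1 : F) ∈ AddSubmonoid.closure {y : F | ∃ e s, y = e ^ p * c ^ s} :=
  AddSubmonoid.subset_closure ⟨1, 0, by simp⟩

lemma Tc_mul (c : F) {a b : F}
    (ha : a ∈ AddSubmonoid.closure {y : F | ∃ e s, y = e ^ p * c ^ s})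
    (hb : b ∈ AddSubmonoid.closure {y : F | ∃ e s, y = e ^ p * c ^ s}) :
    a * b ∈ AddSubmonoid.closure {y : F | ∃ e s, y = e ^ p * c ^ s} := by
  induction ha using AddSubmonoid.closure_induction with
  | mem u hu =>
    induction hb using AddSubmonoid.closure_induction with
    | mem v hv =>
      obtain ⟨e, s, rfl⟩ := hu
      obtain ⟨f, w, rfl⟩ := hv
      exact AddSubmonoid.subset_closure ⟨e * f, s + w, by rw [mul_pow, pow_add]; ring⟩
    | zero => rw [mul_zero]; exact zero_mem _
    | add v w hv hw ihv ihw => rw [mul_add]; exact add_mem ihv ihw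
  | zero => rw [zero_mul]; exact zero_mem _
  | add u v hu hv ihu ihv => rw [add_mul]; exact add_mem ihu ihv

lemma Tc_pow (c : F) {a : F}
    (ha : a ∈ AddSubmonoid.closure {y : F | ∃ e s, y = e ^ p * c ^ s}) (k : ℕ) :
    a ^ k ∈ AddSubmonoid.closure {y : F | ∃ e s, y = e ^ p * c ^ s} := by
  induction k with
  | zero => rw [pow_zero]; exact Tc_mem_one c
  | succ k ih => rw [pow_succ]; exact Tc_mul c ih ha

lemma Tc_prod (c : F) {r : ℕ} (f : Fin r → F)
    (h : ∀ i, f i ∈ AddSubmonoid.closure {y : F | ∃ e s, y = e ^ p * c ^ s}) :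
    (∏ i, f i) ∈ AddSubmonoid.closure {y : F | ∃ e s, y = e ^ p * c ^ s} :=
  Finset.prod_induction f _ (fun _ _ => Tc_mul c) (Tc_mem_one c) (fun i _ => h i)

lemma memG [CharP F p] (S : DiffStr p F) (n : ℕ) (c : F) {a : F}
    (ha : a ∈ AddSubmonoid.closure {y : F | ∃ e s, y = e ^ p * c ^ s})
    {z : DF F} (hz : z ∈ omegaPred F n) :
    a • S.d z ∈ AddSubgroup.closure ((hRel S n : Set (DF F)) ∪
      { x | ∃ z ∈ omegaPred F n, x = c • S.d z }) := by
  induction ha using AddSubmonoid.closure_induction with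
  | mem y hy =>
    obtain ⟨e, s, rfl⟩ := hy
    cases s with
    | zero =>
      have h0 : (e ^ p * c ^ 0) • S.d z = S.d ((e ^ p) • z) := by
        rw [pow_zero, mul_one, d_smul_frob]
      rw [h0]
      exact AddSubgroup.subset_closure
        (Or.inl (AddSubgroup.mem_sup_right ⟨_, Submodule.smul_mem _ _ hz, rfl⟩))
    | succ s =>
      rw [keyId S c e s z]
      refine sub_mem (AddSubgroup.subset_closure (Or.inr ⟨_, Submodule.smul_mem _ _ hz, rfl⟩))
        (AddSubgroup.subset_closure
          (Or.inl (AddSubgroup.mem_sup_right ⟨_, Submodule.smul_mem _ _ hz, rfl⟩)))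
  | zero => rw [zero_smul]; exact zero_mem _
  | add u v hu hv ihu ihv => rw [add_smul]; exact add_mem ihu ihv

end Helpers

open IntermediateField

/-- **Lemma 3.8 (378).** Let `(b₁,m₁),…,(b_r,m_r) ∈ F^* × ℕ_{>0}` and let
`E = F(b₁^{1/p^{m₁}},…,b_r^{1/p^{m_r}})`.
(i) If `[E : F] = p`, then there are `j` and `c ∈ F∖F^p` with `bⱼ = c^{p^{mⱼ−1}}` and
`K_F((b₁,m₁),…,(b_r,m_r)) = image of c·d(Ω_F^{n-1})`.
(ii) If `max{m₁,…,m_r} = 1`, then `K_F((b₁,m₁),…,(b_r,m_r)) = Σᵢ image of bᵢ·d(Ω_F^{n-1})`. -/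
theorem kGroup_degree_p_and_exponent_one
    (p : ℕ) (hp : p.Prime) (F E : Type*) [Field F] [Field E] [Algebra F E]
    [CharP F p] [CharP E p]
    (S : DiffStr p F) (r : ℕ) (b : Fin r → F) (m : Fin r → ℕ)
    (hb : ∀ i, b i ≠ 0) (hm : ∀ i, 1 ≤ m i)
    (β : Fin r → E) (hβ : ∀ i, β i ^ p ^ m i = algebraMap F E (b i))
    (hgen : Algebra.adjoin F (Set.range β) = ⊤) (n : ℕ) :
    (Module.finrank F E = p →
      ∃ (j : Fin r) (c : F), (¬ ∃ y : F, y ^ p = c) ∧ b j = c ^ p ^ (m j - 1) ∧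
        kGroup S b m n = AddSubgroup.closure ((hRel S n : Set (DF F)) ∪
          { x | ∃ z ∈ omegaPred F n, x = c • S.d z })) ∧
    (Finset.univ.sup m = 1 →
      kGroup S b m n = AddSubgroup.closure ((hRel S n : Set (DF F)) ∪
        { x | ∃ i : Fin r, ∃ z ∈ omegaPred F n, x = b i • S.d z })) := by
  haveI : Fact p.Prime := ⟨hp⟩
  constructor
  · -- Part (i)
    intro hdim
    have hp1 : 1 < p := hp.one_lt
    haveI : FiniteDimensional F E := FiniteDimensional.of_finrank_pos (by rw [hdim]; exact hp.pos)
    have hinj : Function.Injective (algebraMap F E) := (algebraMap F E).injective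
    -- there is some j with β j not in the image of F
    have hjex : ∃ j, β j ∉ (algebraMap F E).range := by
      by_contra hcon
      push_neg at hcon
      have hle : Algebra.adjoin F (Set.range β) ≤ ⊥ := by
        rw [Algebra.adjoin_le_iff]
        rintro _ ⟨i, rfl⟩
        simp only [SetLike.mem_coe, Algebra.mem_bot]
        obtain ⟨w, hw⟩ := hcon i
        exact ⟨w, hw⟩
      rw [hgen] at hle
      have hbt : (⊥ : Subalgebra F E) = ⊤ := le_antisymm le_top hle
      have h1 := Subalgebra.bot_eq_top_iff_finrank_eq_one.mp hbt
      rw [hdim] at h1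
      omega
    obtain ⟨j, hj⟩ := hjex
    set x : E := β j with hxdef
    have haev : (Polynomial.aeval x) (Polynomial.X ^ (p ^ m j) - Polynomial.C (b j)) = 0 := by
      rw [map_sub, Polynomial.aeval_X_pow, Polynomial.aeval_C, hβ j, sub_self]
    have hxint : IsIntegral F x :=
      ⟨Polynomial.X ^ (p ^ m j) - Polynomial.C (b j),
        Polynomial.monic_X_pow_sub_C _ (pow_ne_zero _ hp.pos.ne'), haev⟩
    have hdeg : (minpoly F x).natDegree = p := by
      have h1 : Module.finrank F F⟮x⟯ = (minpoly F x).natDegree :=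
        IntermediateField.adjoin.finrank hxint
      have h2 := Module.finrank_mul_finrank (F := F) (K := F⟮x⟯) (A := E)
      have hdvd : (minpoly F x).natDegree ∣ p :=
        ⟨Module.finrank F⟮x⟯ E, by rw [← hdim, ← h2, h1]⟩
      rcases (hp.eq_one_or_self_of_dvd _ hdvd) with h | h
      · exact absurd (minpoly.natDegree_eq_one_iff.mp h) hj
      · exact h
    have htop : F⟮x⟯ = ⊤ := by
      apply IntermediateField.eq_of_le_of_finrank_eq le_top
      rw [IntermediateField.finrank_top', hdim, ← hdeg, IntermediateField.adjoin.finrank hxint]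
    -- the minimal polynomial of x is (X - x)^p over E
    have hdvd1 : minpoly F x ∣ Polynomial.X ^ (p ^ m j) - Polynomial.C (b j) :=
      minpoly.dvd F x haev
    have hXC : (Polynomial.X ^ (p ^ m j) - Polynomial.C (algebraMap F E (b j)) : Polynomial E)
        = (Polynomial.X - Polynomial.C x) ^ (p ^ m j) := by
      rw [sub_pow_char_pow, ← Polynomial.C_pow, hβ j]
    have hdvd2 : (minpoly F x).map (algebraMap F E)
        ∣ (Polynomial.X - Polynomial.C x) ^ (p ^ m j) := by
      have h := Polynomial.map_dvd (algebraMap F E) hdvd1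
      rwa [Polynomial.map_sub, Polynomial.map_pow, Polynomial.map_X, Polynomial.map_C, hXC] at h
    obtain ⟨i, hile, hassoc⟩ := (dvd_prime_pow (Polynomial.prime_X_sub_C x) _).mp hdvd2
    have heq : (minpoly F x).map (algebraMap F E) = (Polynomial.X - Polynomial.C x) ^ i :=
      Polynomial.eq_of_monic_of_associated ((minpoly.monic hxint).map _)
        ((Polynomial.monic_X_sub_C x).pow _) hassoc
    have hip : i = p := by
      have h := congrArg Polynomial.natDegree heq
      rwa [Polynomial.natDegree_map, hdeg, Polynomial.natDegree_pow,
        Polynomial.natDegree_X_sub_C, mul_one, eq_comm] at h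
    set c : F := -((minpoly F x).coeff 0) with hcdef
    have hxp : algebraMap F E c = x ^ p := by
      have h0 := congrArg (fun q => Polynomial.coeff q 0) heq
      simp only [Polynomial.coeff_map] at h0
      rw [hip, sub_pow_char, Polynomial.coeff_sub, Polynomial.coeff_X_pow,
        if_neg hp.pos.ne, ← Polynomial.C_pow, Polynomial.coeff_C, if_pos rfl] at h0
      rw [hcdef, map_neg, h0]
      ring
    have hcnp : ¬ ∃ y : F, y ^ p = c := by
      rintro ⟨y, hy⟩
      apply hj
      refine ⟨y, ?_⟩
      have hyp : (algebraMap F E y) ^ p = x ^ p := by rw [← map_pow, hy, hxp]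
      have hzero : (algebraMap F E y - x) ^ p = 0 := by rw [sub_pow_char, hyp, sub_self]
      have := pow_eq_zero_iff hp.pos.ne' |>.mp hzero
      exact sub_eq_zero.mp this
    have hexp : ∀ i : Fin r, p * p ^ (m i - 1) = p ^ m i := by
      intro i
      rw [← pow_succ']
      congr 1
      have := hm i
      omega
    have hbj : b j = c ^ p ^ (m j - 1) := by
      apply hinj
      rw [map_pow, hxp, ← pow_mul, hexp j, hβ j]
    -- every b i is a p^(m i - 1)-st power of an element of F^p[c]
    have hci : ∀ i : Fin r, ∃ ci : F,
        ci ∈ AddSubmonoid.closure {y : F | ∃ e s, y = e ^ p * c ^ s}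
          ∧ b i = ci ^ p ^ (m i - 1) := by
      intro i
      have hmem : β i ∈ Algebra.adjoin F ({x} : Set E) := by
        have h1 : β i ∈ F⟮x⟯ := by rw [htop]; trivial
        rw [← IntermediateField.adjoin_simple_toSubalgebra_of_isAlgebraic hxint.isAlgebraic]
        exact h1
      rw [Algebra.adjoin_singleton_eq_range_aeval] at hmem
      obtain ⟨q, hq0⟩ := hmem
      have hq : Polynomial.aeval x q = β i := hq0
      refine ⟨∑ k ∈ Finset.range (q.natDegree + 1), (q.coeff k) ^ p * c ^ k,
        AddSubmonoid.sum_mem _ (fun k _ => AddSubmonoid.subset_closure ⟨_, _, rfl⟩), ?_⟩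
      have hsum : algebraMap F E
          (∑ k ∈ Finset.range (q.natDegree + 1), (q.coeff k) ^ p * c ^ k) = (β i) ^ p := by
        rw [map_sum]
        have hterm : ∀ k, algebraMap F E ((q.coeff k) ^ p * c ^ k)
            = (algebraMap F E (q.coeff k) * x ^ k) ^ p := by
          intro k
          rw [map_mul, map_pow, map_pow, hxp, mul_pow, ← pow_mul, ← pow_mul, mul_comm p k]
        simp_rw [hterm]
        rw [← sum_pow_char]
        congr 1
        rw [← hq, Polynomial.aeval_eq_sum_range]
        exact Finset.sum_congr rfl (fun k _ => by rw [Algebra.smul_def])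
      apply hinj
      rw [map_pow, hsum, ← pow_mul, hexp i, hβ i]
    choose ci hciT hbi using hci
    -- the group equality
    refine ⟨j, c, hcnp, hbj, ?_⟩
    apply le_antisymm
    · rw [kGroup]
      refine (AddSubgroup.closure_le _).mpr ?_
      rintro y (hy | hy | hy)
      · exact AddSubgroup.subset_closure (Or.inl hy)
      · obtain ⟨i, z, hz, rfl⟩ := hy
        have hbiT : b i ∈ AddSubmonoid.closure {y : F | ∃ e s, y = e ^ p * c ^ s} := by
          rw [hbi i]
          exact Tc_pow c (hciT i) _
        exact memG S n c hbiT hz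
      · obtain ⟨t, k, ht0, htlt, hk, v, hv, rfl⟩ := hy
        have hli : ∀ i : Fin r, ∃ li : ℕ, k i * p ^ (m i - 1) = li * p ^ t := by
          intro i
          rcases le_or_gt (m i) t with hle | hlt
          · obtain ⟨qi, hqi⟩ := (hk i).2
            refine ⟨qi, ?_⟩
            rw [hqi, mul_comm (p ^ (t + 1 - m i)) qi, mul_assoc, ← pow_add]
            congr 2
            have := hm i
            omega
          · refine ⟨k i * p ^ (m i - 1 - t), ?_⟩
            rw [mul_assoc, ← pow_add]
            congr 2
            omega
        choose l hl using hli
        have hprod : (∏ i, b i ^ k i) = (∏ i, ci i ^ l i) ^ p ^ t := by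
          rw [← Finset.prod_pow]
          refine Finset.prod_congr rfl (fun i _ => ?_)
          rw [hbi i, ← pow_mul, ← pow_mul, mul_comm (p ^ (m i - 1)) (k i), hl i]
        have hDT : (∏ i, ci i ^ l i) ∈ AddSubmonoid.closure {y : F | ∃ e s, y = e ^ p * c ^ s} :=
          Tc_prod c _ (fun i => Tc_pow c (hciT i) _)
        have hdvΩ : S.d v ∈ omegaPow F n := omegaPred_d_mem S hv
        have hkey := key3 S n hdvΩ (∏ i, ci i ^ l i) t
        have hsplit : (∏ i, b i ^ k i) • spIter S t (S.d v)
            = ((∏ i, ci i ^ l i) ^ p ^ t • spIter S t (S.d v) - (∏ i, ci i ^ l i) • S.d v)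
              + (∏ i, ci i ^ l i) • S.d v := by
          rw [hprod]; abel
        rw [hsplit]
        exact add_mem (AddSubgroup.subset_closure (Or.inl hkey)) (memG S n c hDT hv)
    · refine (AddSubgroup.closure_le _).mpr ?_
      rintro y (hy | hy)
      · exact AddSubgroup.subset_closure (Or.inl hy)
      · obtain ⟨z, hz, rfl⟩ := hy
        by_cases hmj : m j = 1
        · apply AddSubgroup.subset_closure
          refine Or.inr (Or.inl ⟨j, z, hz, ?_⟩)
          rw [hbj, hmj]
          norm_num
        · have ht0 : 0 < m j - 1 := by have := hm j; omega
          have hdzΩ : S.d z ∈ omegaPow F n := omegaPred_d_mem S hz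
          have hkey := key3 S n hdzΩ c (m j - 1)
          have hprodj : (∏ i, b i ^ (if i = j then 1 else 0)) = b j := by
            rw [show (fun i => b i ^ (if i = j then 1 else 0))
                = fun i => if i = j then b i else 1 from funext fun i => by split <;> simp]
            simp [Finset.prod_ite_eq']
          have hgenmem : (b j) • spIter S (m j - 1) (S.d z) ∈
              AddSubgroup.closure ((hRel S n : Set (DF F)) ∪ kGens S b m n) := by
            rw [← hprodj]
            refine AddSubgroup.subset_closure (Or.inr (Or.inr
              ⟨m j - 1, fun i => if i = j then 1 else 0, ht0, ?_, ?_, z, hz, rfl⟩))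
            · exact lt_of_lt_of_le (by have := hm j; omega) (Finset.le_sup (Finset.mem_univ j))
            · intro i
              by_cases hij : i = j
              · subst hij
                refine ⟨?_, ?_⟩
                · simp only [if_pos rfl]
                  exact Nat.one_lt_pow ht0.ne' hp1
                · simp only [if_pos rfl]
                  have h00 : m i - 1 + 1 - m i = 0 := by have := hm i; omega
                  rw [h00, pow_zero]
                  simp
              · simp only [if_neg hij]
                exact ⟨pow_pos hp.pos _, dvd_zero _⟩
          have hsplit : c • S.d z = (b j) • spIter S (m j - 1) (S.d z)
              - (c ^ p ^ (m j - 1) • spIter S (m j - 1) (S.d z) - c • S.d z) := by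
            rw [hbj]; abel
          rw [kGroup, hsplit]
          exact sub_mem hgenmem (AddSubgroup.subset_closure (Or.inl hkey))
  · -- Part (ii)
    intro hsup
    have hkg : kGens S b m n = { x | ∃ i : Fin r, ∃ z ∈ omegaPred F n, x = b i • S.d z } := by
      rw [kGens]
      apply Set.union_eq_self_of_subset_right
      rintro y ⟨t, k, ht0, htlt, -⟩
      rw [hsup] at htlt
      omega
    rw [kGroup, hkg]
end
end

section
/- Let F be a field of characteristic p > 0 and E = F(b_1^{1/p^{m_1}},…,b_r^{1/p^{m_r}}) a purely inseparable extension of exponent e with b_1,…,b_r ∈ F∖F^p and integers m_1,…,m_r ≥ 1. Then for every t with 1 ≤ t ≤ e − 1, every v ∈ Ω_F^{n-1}, and all k_1,…,k_r ∈ ℕ such that max{1, p^{t−m_j+1}} divides k_j for j = 1,…,r, the class of b_1^{k_1}···b_r^{k_r}·(dv)^{[p^t]} lies in H_p^{n+1}(E/F), and it can be written as a sum of the generators of K_F((b_1,m_1),…,(b_r,m_r)) of degree at most t (where a generator of type (ii) has degree t if its exponent on dv is p^t and not all k(t,1),…,k(t,r) are divisible by p). -/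
noncomputable section

namespace Cor37

variable {p : ℕ} {F : Type*} [Field F]

theorem spIter_zero (S : DiffStr p F) (x : DF F) : spIter S 0 x = x := rfl

theorem spIter_succ' (S : DiffStr p F) (t : ℕ) (x : DF F) :
    spIter S (t + 1) x = S.sp (spIter S t x) := Function.iterate_succ_apply' _ _ _

theorem spIter_add (S : DiffStr p F) (t : ℕ) (x y : DF F) :
    spIter S t (x + y) = spIter S t x + spIter S t y := by
  induction t with
  | zero => rfl
  | succ t ih => simp [spIter_succ', ih]

theorem spIter_zero_apply (S : DiffStr p F) (t : ℕ) : spIter S t 0 = 0 := by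
  induction t with
  | zero => rfl
  | succ t ih => simp [spIter_succ', ih]

theorem spIter_neg (S : DiffStr p F) (t : ℕ) (x : DF F) :
    spIter S t (-x) = - spIter S t x := by
  induction t with
  | zero => rfl
  | succ t ih => simp [spIter_succ', ih]

theorem spIter_sub (S : DiffStr p F) (t : ℕ) (x y : DF F) :
    spIter S t (x - y) = spIter S t x - spIter S t y := by
  rw [sub_eq_add_neg, spIter_add, spIter_neg, ← sub_eq_add_neg]

theorem spIter_mem (S : DiffStr p F) (n t : ℕ) {x : DF F} (hx : x ∈ omegaPow F n) :
    spIter S t x ∈ omegaPow F n := by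
  induction t with
  | zero => exact hx
  | succ t ih => rw [spIter_succ']; exact S.sp_grade n _ ih

theorem d_mem_omegaPow (S : DiffStr p F) (n : ℕ) {z : DF F} (hz : z ∈ omegaPred F n) :
    S.d z ∈ omegaPow F n := by
  cases n with
  | zero =>
    have : z = 0 := by simpa [omegaPred] using hz
    simp [this]
  | succ n => exact S.d_grade n z hz

theorem dForm_mul (a b : F) : dForm F (a * b) = a • dForm F b + b • dForm F a := by
  unfold dForm
  rw [Derivation.leibniz, map_add, map_smul, map_smul]

theorem dForm_pow_char [CharP F p] (hp : p ≠ 0) (x : F) : dForm F (x ^ p) = 0 := by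
  unfold dForm
  rw [Derivation.leibniz_pow, ← Nat.cast_smul_eq_nsmul F, CharP.cast_eq_zero F p, zero_smul,
    map_zero]

theorem dForm_pow_dvd [CharP F p] (hp : p ≠ 0) (x : F) {e : ℕ} (he : p ∣ e) :
    dForm F (x ^ e) = 0 := by
  obtain ⟨c, rfl⟩ := he
  rw [mul_comm, pow_mul]
  exact dForm_pow_char hp _

theorem d_smul_of_dvd [CharP F p] (hp : p ≠ 0) (S : DiffStr p F) (a : F) {e : ℕ} (he : p ∣ e)
    (η : DF F) : (a ^ e) • S.d η = S.d ((a ^ e) • η) := by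
  rw [S.d_smul, dForm_pow_dvd hp a he, zero_mul, zero_add]

theorem sp_eq_add_asMap (S : DiffStr p F) (x : DF F) : S.sp x = x + asMap S x := by
  simp [asMap]

theorem d_mem_hRel (S : DiffStr p F) (n : ℕ) {ζ : DF F} (hζ : ζ ∈ omegaPred F n) :
    S.d ζ ∈ hRel S n :=
  AddSubgroup.mem_sup_right ⟨ζ, hζ, rfl⟩

theorem as_mem_hRel (S : DiffStr p F) (n : ℕ) {u : DF F} (hu : u ∈ omegaPow F n) :
    asMap S u ∈ hRel S n :=
  AddSubgroup.mem_sup_left ⟨u, hu, rfl⟩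

theorem spIter_d_mem_hRel (S : DiffStr p F) (n : ℕ) {ζ : DF F} (hζ : ζ ∈ omegaPred F n)
    (i : ℕ) : spIter S i (S.d ζ) ∈ hRel S n := by
  induction i with
  | zero => exact d_mem_hRel S n hζ
  | succ i ih =>
    rw [spIter_succ', sp_eq_add_asMap]
    exact add_mem ih (as_mem_hRel S n (spIter_mem S n i (d_mem_omegaPow S n hζ)))


theorem logForm_nil (x : Fin 0 → F) : logForm F x = 1 := by
  simp [logForm]

theorem logForm_succ {n : ℕ} (x : Fin (n + 1) → F) :
    logForm F x = dLog F (x 0) * logForm F (Fin.tail x) := by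
  simp [logForm, List.ofFn_succ, Fin.tail]

theorem logForm_snoc {n : ℕ} (x : Fin n → F) (a : F) :
    logForm F (Fin.snoc x a) = logForm F x * dLog F a := by
  rw [logForm, logForm, List.ofFn_succ', List.prod_concat]
  simp [Fin.snoc_castSucc, Fin.snoc_last]

theorem dLog_mem (a : F) :
    dLog F a ∈ LinearMap.range (ExteriorAlgebra.ι F :
      KaehlerDifferential ℤ F →ₗ[F] DF F) := ⟨_, rfl⟩

theorem dForm_mem (a : F) :
    dForm F a ∈ LinearMap.range (ExteriorAlgebra.ι F :
      KaehlerDifferential ℤ F →ₗ[F] DF F) := ⟨_, rfl⟩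

theorem logForm_mem {n : ℕ} (x : Fin n → F) : logForm F x ∈ omegaPow F n := by
  induction n with
  | zero =>
    rw [logForm_nil, omegaPow, pow_zero]
    exact Submodule.mem_one.mpr ⟨1, map_one _⟩
  | succ n ih =>
    rw [logForm_succ]
    show _ ∈ (LinearMap.range (ExteriorAlgebra.ι F :
      KaehlerDifferential ℤ F →ₗ[F] DF F)) ^ (n + 1)
    rw [pow_succ']
    exact Submodule.mul_mem_mul (dLog_mem (x 0)) (ih (Fin.tail x))

theorem dForm_eq_smul_dLog {a : F} (ha : a ≠ 0) : dForm F a = a • dLog F a := by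
  unfold dForm dLog
  rw [map_smul, smul_smul, mul_inv_cancel₀ ha, one_smul]

theorem dForm_mul_omegaPred_mem (b : F) {n : ℕ} {w : DF F} (hw : w ∈ omegaPred F n) :
    dForm F b * w ∈ omegaPow F n := by
  cases n with
  | zero =>
    have : w = 0 := by simpa [omegaPred] using hw
    simp [this]
  | succ n =>
    show _ ∈ (LinearMap.range (ExteriorAlgebra.ι F :
      KaehlerDifferential ℤ F →ₗ[F] DF F)) ^ (n + 1)
    rw [pow_succ']
    exact Submodule.mul_mem_mul (dForm_mem b) hw

theorem omegaPow_le_span (n : ℕ) :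
    omegaPow F n ≤ Submodule.span F (Set.range (logForm F (n := n))) := by
  induction n with
  | zero =>
    intro x hx
    rw [omegaPow, pow_zero] at hx
    rcases Submodule.mem_one.mp hx with ⟨y, rfl⟩
    rw [Algebra.algebraMap_eq_smul_one]
    exact Submodule.smul_mem _ _
      (Submodule.subset_span ⟨fun i => (1 : F), logForm_nil _⟩)
  | succ n ih =>
    rw [omegaPow, pow_succ]
    refine Submodule.mul_le.mpr fun x hx y hy => ?_
    obtain ⟨u, rfl⟩ := hy
    have hx' : x ∈ Submodule.span F (Set.range (logForm F (n := n))) := ih hx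
    have hu : u ∈ Submodule.span F (Set.range (KaehlerDifferential.D ℤ F)) := by
      rw [KaehlerDifferential.span_range_derivation]; trivial
    clear hx
    induction hu using Submodule.span_induction with
    | zero => rw [map_zero, mul_zero]; exact zero_mem _
    | add u₁ u₂ h1 h2 ih1 ih2 => rw [map_add, mul_add]; exact add_mem ih1 ih2
    | smul c u hu ihu =>
      rw [map_smul, mul_smul_comm]; exact Submodule.smul_mem _ _ ihu
    | mem u hu =>
      obtain ⟨a, rfl⟩ := hu
      induction hx' using Submodule.span_induction with
      | zero => rw [zero_mul]; exact zero_mem _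
      | add x₁ x₂ h1 h2 ih1 ih2 => rw [add_mul]; exact add_mem ih1 ih2
      | smul c x hx ihx => rw [smul_mul_assoc]; exact Submodule.smul_mem _ _ ihx
      | mem x hx =>
        obtain ⟨v, rfl⟩ := hx
        by_cases ha : a = 0
        · subst ha
          have : (ExteriorAlgebra.ι F (KaehlerDifferential.D ℤ F (0 : F)) : DF F) = 0 := by
            rw [map_zero, map_zero]
          rw [this, mul_zero]; exact zero_mem _
        · have h1 : (ExteriorAlgebra.ι F (KaehlerDifferential.D ℤ F a) : DF F)
              = a • dLog F a := dForm_eq_smul_dLog ha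
          rw [h1, mul_smul_comm, ← logForm_snoc]
          exact Submodule.smul_mem _ _ (Submodule.subset_span ⟨_, rfl⟩)


/-- Lemma A: Frobenius semilinearity of `s_p` up to exact forms. -/
theorem spA [CharP F p] (hp : p ≠ 0) (S : DiffStr p F) (n : ℕ) {ω : DF F}
    (hω : ω ∈ omegaPow F n) (a : F) :
    ∃ ζ ∈ omegaPred F n, S.sp (a • ω) = a ^ p • S.sp ω + S.d ζ := by
  have hω' : ω ∈ Submodule.span F (Set.range (logForm F (n := n))) := omegaPow_le_span n hω
  clear hω
  induction hω' using Submodule.span_induction generalizing a with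
  | zero => exact ⟨0, zero_mem _, by simp⟩
  | add x y hx hy ihx ihy =>
    obtain ⟨ζ₁, hζ₁, h1⟩ := ihx a
    obtain ⟨ζ₂, hζ₂, h2⟩ := ihy a
    refine ⟨ζ₁ + ζ₂, add_mem hζ₁ hζ₂, ?_⟩
    rw [smul_add, map_add, h1, h2, map_add, map_add, smul_add]
    abel
  | smul c x hx ihx =>
    obtain ⟨ζ₁, hζ₁, h1⟩ := ihx (a * c)
    obtain ⟨ζ₂, hζ₂, h2⟩ := ihx c
    refine ⟨ζ₁ - a ^ p • ζ₂, sub_mem hζ₁ (Submodule.smul_mem _ _ hζ₂), ?_⟩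
    rw [smul_smul, h1, h2, map_sub, smul_add, smul_smul, ← mul_pow]
    rw [← d_smul_of_dvd hp S a (dvd_refl p)]
    abel
  | mem x hx =>
    obtain ⟨v, rfl⟩ := hx
    obtain ⟨η₁, hη₁, h1⟩ := S.sp_log n a v
    obtain ⟨η₂, hη₂, h2⟩ := S.sp_log n 1 v
    rw [one_smul, one_pow, one_smul] at h2
    refine ⟨η₁ - a ^ p • η₂, sub_mem hη₁ (Submodule.smul_mem _ _ hη₂), ?_⟩
    rw [h1, h2, map_sub, smul_add]
    rw [← d_smul_of_dvd hp S a (dvd_refl p)]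
    abel

/-- The additive subgroup of accumulated error terms `Σ_{i<j} s_p^i(dζ_i)`. -/
def errS (S : DiffStr p F) (n j : ℕ) : AddSubgroup (DF F) :=
  AddSubgroup.closure { x | ∃ i < j, ∃ ζ ∈ omegaPred F n, x = spIter S i (S.d ζ) }

theorem d_mem_errS (S : DiffStr p F) (n : ℕ) {ζ : DF F} (hζ : ζ ∈ omegaPred F n) {j : ℕ}
    (hj : 0 < j) : S.d ζ ∈ errS S n j :=
  AddSubgroup.subset_closure ⟨0, hj, ζ, hζ, (spIter_zero S _).symm⟩

theorem sp_mem_errS (S : DiffStr p F) (n j : ℕ) {x : DF F} (hx : x ∈ errS S n j) :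
    S.sp x ∈ errS S n (j + 1) := by
  induction hx using AddSubgroup.closure_induction with
  | mem x hx =>
    obtain ⟨i, hij, ζ, hζ, rfl⟩ := hx
    exact AddSubgroup.subset_closure ⟨i + 1, by omega, ζ, hζ, (spIter_succ' S i _).symm⟩
  | zero => rw [map_zero]; exact zero_mem _
  | add x y hx hy ihx ihy => rw [map_add]; exact add_mem ihx ihy
  | neg x hx ihx => rw [map_neg]; exact neg_mem ihx

theorem errS_le_hRel (S : DiffStr p F) (n j : ℕ) : errS S n j ≤ hRel S n := by
  rw [errS, AddSubgroup.closure_le]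
  rintro x ⟨i, hij, ζ, hζ, rfl⟩
  exact spIter_d_mem_hRel S n hζ i

/-- Iterated semilinearity (Lemma B). -/
theorem LB [CharP F p] (hp : p ≠ 0) (S : DiffStr p F) (n : ℕ) (a : F) {ω : DF F}
    (hω : ω ∈ omegaPow F n) (j : ℕ) :
    spIter S j (a • ω) - a ^ p ^ j • spIter S j ω ∈ errS S n j := by
  induction j with
  | zero => simp only [spIter_zero, pow_zero, pow_one, sub_self]; exact zero_mem _
  | succ j ih =>
    obtain ⟨ζ, hζ, hsp⟩ := spA hp S n (spIter_mem S n j hω) (a ^ p ^ j)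
    have key : spIter S (j + 1) (a • ω) - a ^ p ^ (j + 1) • spIter S (j + 1) ω
        = S.d ζ + S.sp (spIter S j (a • ω) - a ^ p ^ j • spIter S j ω) := by
      rw [spIter_succ', spIter_succ', map_sub, hsp, ← pow_mul, ← pow_succ]
      abel
    rw [key]
    exact add_mem (d_mem_errS S n hζ (by omega)) (sp_mem_errS S n j ih)

/-- Lemma E′: semilinear behaviour of `s_p` on forms `db ∧ w`. -/
theorem spB [CharP F p] (hp : p ≠ 0) (S : DiffStr p F) (n : ℕ) {b : F} (hb : b ≠ 0)
    {w : DF F} (hw : w ∈ omegaPred F n) :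
    ∃ w' ∈ omegaPred F n, ∃ ζ ∈ omegaPred F n,
      S.sp (dForm F b * w) = b ^ (p - 1) • (dForm F b * w') + S.d ζ := by
  cases n with
  | zero =>
    have : w = 0 := by simpa [omegaPred] using hw
    refine ⟨0, zero_mem _, 0, zero_mem _, ?_⟩
    simp [this]
  | succ n =>
    have hw' : w ∈ Submodule.span F (Set.range (logForm F (n := n))) :=
      omegaPow_le_span n hw
    have hspan : Submodule.span F (Set.range (logForm F (n := n))) ≤ omegaPow F n := by
      rw [Submodule.span_le]; rintro x ⟨v, rfl⟩; exact logForm_mem v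
    clear hw
    induction hw' using Submodule.span_induction with
    | zero =>
      refine ⟨0, zero_mem _, 0, zero_mem _, ?_⟩
      simp
    | add x y hx hy ihx ihy =>
      obtain ⟨w₁, hw₁, ζ₁, hζ₁, h1⟩ := ihx
      obtain ⟨w₂, hw₂, ζ₂, hζ₂, h2⟩ := ihy
      refine ⟨w₁ + w₂, add_mem hw₁ hw₂, ζ₁ + ζ₂, add_mem hζ₁ hζ₂, ?_⟩
      rw [mul_add, map_add, h1, h2, mul_add, smul_add, map_add]
      abel
    | smul c x hx ihx =>
      obtain ⟨w₁, hw₁, ζ₁, hζ₁, h1⟩ := ihx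
      have hxo : dForm F b * x ∈ omegaPow F (n + 1) :=
        dForm_mul_omegaPred_mem b (show x ∈ omegaPred F (n + 1) from hspan hx)
      obtain ⟨ξ, hξ, h2⟩ := spA hp S (n + 1) hxo c
      refine ⟨c ^ p • w₁, Submodule.smul_mem _ _ hw₁,
        c ^ p • ζ₁ + ξ, add_mem (Submodule.smul_mem _ _ hζ₁) hξ, ?_⟩
      rw [mul_smul_comm, h2, h1, smul_add, map_add, smul_smul,
        ← d_smul_of_dvd hp S c (dvd_refl p), mul_smul_comm (c ^ p) (dForm F b) w₁,
        smul_smul, mul_comm (b ^ (p - 1)) (c ^ p)]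
      abel
    | mem x hx =>
      obtain ⟨v, rfl⟩ := hx
      have hcons : dForm F b * logForm F v = b • logForm F (Fin.cons b v) := by
        rw [logForm_succ (Fin.cons b v), Fin.cons_zero, Fin.tail_cons,
          dForm_eq_smul_dLog hb, smul_mul_assoc]
      obtain ⟨η, hη, h1⟩ := S.sp_log (n + 1) b (Fin.cons b v)
      refine ⟨logForm F v, logForm_mem v, η, hη, ?_⟩
      rw [hcons, h1, smul_smul, ← pow_succ,
        Nat.sub_add_cancel (Nat.one_le_iff_ne_zero.mpr hp)]


/-- Iterated Lemma E′. -/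
theorem spBiter [CharP F p] (hp : p ≠ 0) (S : DiffStr p F) (n : ℕ) {b : F} (hb : b ≠ 0)
    {w : DF F} (hw : w ∈ omegaPred F n) (j : ℕ) :
    ∃ w' ∈ omegaPred F n,
      spIter S j (dForm F b * w) - b ^ (p ^ j - 1) • (dForm F b * w') ∈ errS S n j := by
  induction j with
  | zero =>
    refine ⟨w, hw, ?_⟩
    simp only [spIter_zero, pow_zero, pow_one]
    have : b ^ (1 - 1) = 1 := by norm_num
    rw [this, one_smul, sub_self]
    exact zero_mem _
  | succ j ih =>
    obtain ⟨w₁, hw₁, he⟩ := ih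
    obtain ⟨ξ, hξ, h2⟩ := spA hp S n (dForm_mul_omegaPred_mem b hw₁) (b ^ (p ^ j - 1))
    obtain ⟨w', hw', ζ, hζ, h3⟩ := spB hp S n hb hw₁
    have hppos : 1 ≤ p ^ j := Nat.one_le_iff_ne_zero.mpr (pow_ne_zero _ hp)
    have hppos' : p ≤ p ^ (j + 1) := by
      calc p = p ^ 1 := (pow_one p).symm
      _ ≤ p ^ (j + 1) := Nat.pow_le_pow_right (Nat.pos_of_ne_zero hp) (by omega)
    have hmul : (p ^ j - 1) * p = p ^ (j + 1) - p := by
      rw [Nat.sub_mul, one_mul, ← pow_succ]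
    have harith : (p ^ j - 1) * p + (p - 1) = p ^ (j + 1) - 1 := by
      have hp1 : 1 ≤ p := Nat.one_le_iff_ne_zero.mpr hp
      omega
    have hd : p ∣ (p ^ j - 1) * p := dvd_mul_left p _
    have key : spIter S (j + 1) (dForm F b * w) - b ^ (p ^ (j + 1) - 1) • (dForm F b * w')
        = S.sp (spIter S j (dForm F b * w) - b ^ (p ^ j - 1) • (dForm F b * w₁))
          + S.d ξ + S.d (b ^ ((p ^ j - 1) * p) • ζ) := by
      rw [spIter_succ', map_sub, h2, h3, smul_add, smul_smul, ← pow_mul, ← pow_add, harith,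
        ← d_smul_of_dvd hp S b hd]
      abel
    refine ⟨w', hw', ?_⟩
    rw [key]
    exact add_mem (add_mem (sp_mem_errS S n j he) (d_mem_errS S n hξ (by omega)))
      (d_mem_errS S n (Submodule.smul_mem _ _ hζ) (by omega))

/-- The three-term identity `xy·dz = x·d(yz) + y·d(xz) − d(xyz)`. -/
theorem I3 (S : DiffStr p F) (x y : F) (z : DF F) :
    (x * y) • S.d z = x • S.d (y • z) + y • S.d (x • z) - S.d ((x * y) • z) := by
  rw [S.d_smul, S.d_smul, S.d_smul, dForm_mul, smul_add, smul_add, add_mul,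
    smul_mul_assoc, smul_mul_assoc, smul_smul, smul_smul, mul_comm y x]
  abel




variable {p : ℕ} {F E : Type*} [Field F] [Field E] [Algebra F E]
  {SF : DiffStr p F} {SE : DiffStr p E}

theorem res_dLog (R : DiffRes p F E SF SE) (a : F) :
    R.res (dLog F a) = dLog E (algebraMap F E a) := by
  have h1 : dLog F a = a⁻¹ • dForm F a := by
    unfold dLog dForm; rw [map_smul]
  have h2 : dLog E (algebraMap F E a) = (algebraMap F E a)⁻¹ • dForm E (algebraMap F E a) := by
    unfold dLog dForm; rw [map_smul]
  rw [h1, h2, R.res_smul, R.res_dForm, map_inv₀]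

theorem res_logForm (R : DiffRes p F E SF SE) {n : ℕ} (x : Fin n → F) :
    R.res (logForm F x) = logForm E (fun i => algebraMap F E (x i)) := by
  induction n with
  | zero => rw [logForm_nil, logForm_nil, R.res_one]
  | succ n ih =>
    rw [logForm_succ, logForm_succ, R.res_mul, res_dLog, ih (Fin.tail x)]
    rfl

theorem res_omegaPred (R : DiffRes p F E SF SE) (n : ℕ) {z : DF F} (hz : z ∈ omegaPred F n) :
    R.res z ∈ omegaPred E n := by
  cases n with
  | zero =>
    have : z = 0 := by simpa [omegaPred] using hz
    simp [this, omegaPred]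
  | succ n => exact R.res_grade n z hz

/-- Restriction commutes with `s_p` modulo exact forms. -/
theorem RS [CharP F p] [CharP E p] (hp : p ≠ 0) (R : DiffRes p F E SF SE) (n : ℕ)
    {x : DF F} (hx : x ∈ omegaPow F n) :
    ∃ ζ ∈ omegaPred E n, R.res (SF.sp x) = SE.sp (R.res x) + SE.d ζ := by
  have hx' : x ∈ Submodule.span F (Set.range (logForm F (n := n))) := omegaPow_le_span n hx
  have hspan : Submodule.span F (Set.range (logForm F (n := n))) ≤ omegaPow F n := by
    rw [Submodule.span_le]; rintro y ⟨v, rfl⟩; exact logForm_mem v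
  clear hx
  induction hx' using Submodule.span_induction with
  | zero => exact ⟨0, zero_mem _, by simp⟩
  | add x y hx hy ihx ihy =>
    obtain ⟨ζ₁, hζ₁, h1⟩ := ihx
    obtain ⟨ζ₂, hζ₂, h2⟩ := ihy
    exact ⟨ζ₁ + ζ₂, add_mem hζ₁ hζ₂, by simp only [map_add, h1, h2]; abel⟩
  | smul c x hx ihx =>
    obtain ⟨ζ, hζ, h1⟩ := ihx
    obtain ⟨ζ₀, hζ₀, h2⟩ := spA hp SF n (hspan hx) c
    obtain ⟨ξ, hξ, h3⟩ := spA hp SE n (R.res_grade n x (hspan hx)) (algebraMap F E c)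
    refine ⟨algebraMap F E c ^ p • ζ + R.res ζ₀ - ξ,
      sub_mem (add_mem (Submodule.smul_mem _ _ hζ) (res_omegaPred R n hζ₀)) hξ, ?_⟩
    rw [h2, map_add, R.res_smul, map_pow, h1, R.res_smul, h3, R.res_d, map_sub, map_add,
      smul_add, ← d_smul_of_dvd hp SE (algebraMap F E c) (dvd_refl p)]
    abel
  | mem x hx =>
    obtain ⟨v, rfl⟩ := hx
    obtain ⟨η, hη, h1⟩ := SF.sp_log n 1 v
    rw [one_smul, one_pow, one_smul] at h1
    obtain ⟨η', hη', h2⟩ := SE.sp_log n 1 (fun i => algebraMap F E (v i))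
    rw [one_smul, one_pow, one_smul] at h2
    refine ⟨R.res η - η', sub_mem (res_omegaPred R n hη) hη', ?_⟩
    rw [h1, map_add, R.res_d, res_logForm, h2, map_sub]
    abel

/-- Restriction commutes with iterates of `s_p` on exact forms, up to error terms. -/
theorem RSiter [CharP F p] [CharP E p] (hp : p ≠ 0) (R : DiffRes p F E SF SE) (n : ℕ)
    {w : DF F} (hw : w ∈ omegaPred F n) (j : ℕ) :
    R.res (spIter SF j (SF.d w)) - spIter SE j (SE.d (R.res w)) ∈ errS SE n j := by
  induction j with
  | zero =>
    rw [spIter_zero, spIter_zero, R.res_d, sub_self]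
    exact zero_mem _
  | succ j ih =>
    obtain ⟨ζ, hζ, h1⟩ := RS hp R n (spIter_mem SF n j (d_mem_omegaPow SF n hw))
    have key : R.res (spIter SF (j + 1) (SF.d w)) - spIter SE (j + 1) (SE.d (R.res w))
        = SE.sp (R.res (spIter SF j (SF.d w)) - spIter SE j (SE.d (R.res w))) + SE.d ζ := by
      rw [spIter_succ', spIter_succ', h1, map_sub]
      abel
    rw [key]
    exact add_mem (sp_mem_errS SE n j ih) (d_mem_errS SE n hζ (by omega))

/-- `e^{p^{i+1}} • s_p^i(dζ)` is a relation. -/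
theorem Wlem [CharP E p] (hp : p ≠ 0) (SE : DiffStr p E) (n : ℕ) (i : ℕ) (e : E)
    {ζ : DF E} (hζ : ζ ∈ omegaPred E n) :
    e ^ p ^ (i + 1) • spIter SE i (SE.d ζ) ∈ hRel SE n := by
  have h1 : e ^ p ^ (i + 1) = (e ^ p) ^ p ^ i := by
    rw [← pow_mul, ← pow_succ']
  have h2 := LB hp SE n (e ^ p) (d_mem_omegaPow SE n hζ) i
  have h3 : (e ^ p) • SE.d ζ = SE.d ((e ^ p) • ζ) := d_smul_of_dvd hp SE e (dvd_refl p) ζ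
  have key : e ^ p ^ (i + 1) • spIter SE i (SE.d ζ)
      = spIter SE i (SE.d ((e ^ p) • ζ))
        - (spIter SE i ((e ^ p) • SE.d ζ) - (e ^ p) ^ p ^ i • spIter SE i (SE.d ζ)) := by
    rw [h1, ← h3]
    abel
  rw [key]
  exact sub_mem (spIter_d_mem_hRel SE n (Submodule.smul_mem _ _ hζ) i) (errS_le_hRel SE n i h2)

end Cor37


set_option maxHeartbeats 2000000 in
/-- **Corollary 3.7 (37).** Let `E = F(b₁^{1/p^{m₁}},…,b_r^{1/p^{m_r}})` be purely
inseparable of exponent `e = max{m₁,…,m_r}` with `bᵢ ∈ F∖F^p`, `mᵢ ≥ 1`. For every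
`1 ≤ t ≤ e−1` and all `k₁,…,k_r ∈ ℕ` with `max{1, p^{t−mⱼ+1}} ∣ kⱼ`, the class of
`b₁^{k₁}⋯b_r^{k_r}·(dv)^{[p^t]}` lies in `H_p^{n+1}(E/F)` and can be written as a sum of
generators of `K_F((b₁,m₁),…,(b_r,m_r))` of degree at most `t`. -/
theorem hKernel_generators_degree_le
    (p : ℕ) (hp : p.Prime) (F E : Type*) [Field F] [Field E] [Algebra F E]
    [CharP F p] [CharP E p]
    (SF : DiffStr p F) (SE : DiffStr p E) (R : DiffRes p F E SF SE)
    (r : ℕ) (b : Fin r → F) (m : Fin r → ℕ)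
    (hb : ∀ i, ¬ ∃ y : F, y ^ p = b i) (hm : ∀ i, 1 ≤ m i)
    (β : Fin r → E) (hβ : ∀ i, β i ^ p ^ m i = algebraMap F E (b i))
    (hgen : Algebra.adjoin F (Set.range β) = ⊤)
    (n t : ℕ) (ht : 0 < t) (ht' : t < Finset.univ.sup m)
    (k : Fin r → ℕ) (hk : ∀ j, p ^ (t + 1 - m j) ∣ k j)
    (v : DF F) (hv : v ∈ omegaPred F n) :
    R.res ((∏ i, b i ^ k i) • spIter SF t (SF.d v)) ∈ hRel SE n ∧
    (∏ i, b i ^ k i) • spIter SF t (SF.d v) ∈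
      AddSubgroup.closure ((hRel SF n : Set (DF F)) ∪
        { x | ∃ i : Fin r, ∃ z ∈ omegaPred F n, x = b i • SF.d z } ∪
        { x | ∃ (t' : ℕ) (k' : Fin r → ℕ), 0 < t' ∧ t' ≤ t ∧
            (∀ i, k' i < p ^ t' ∧ p ^ (t' + 1 - m i) ∣ k' i) ∧
            ∃ w ∈ omegaPred F n, x = (∏ i, b i ^ k' i) • spIter SF t' (SF.d w) }) := by
  classical
  have hp0 : p ≠ 0 := hp.ne_zero
  have hppos : 0 < p := hp.pos
  have hb0 : ∀ i, b i ≠ 0 := by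
    intro i h
    exact hb i ⟨0, by rw [zero_pow hp0]; exact h.symm⟩
  set G : Set (DF F) := ((hRel SF n : Set (DF F)) ∪
        { x | ∃ i : Fin r, ∃ z ∈ omegaPred F n, x = b i • SF.d z } ∪
        { x | ∃ (t' : ℕ) (k' : Fin r → ℕ), 0 < t' ∧ t' ≤ t ∧
            (∀ i, k' i < p ^ t' ∧ p ^ (t' + 1 - m i) ∣ k' i) ∧
            ∃ w ∈ omegaPred F n, x = (∏ i, b i ^ k' i) • spIter SF t' (SF.d w) }) with hG
  have genHrel : ∀ x ∈ hRel SF n, x ∈ AddSubgroup.closure G :=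
    fun x hx => AddSubgroup.subset_closure (Or.inl (Or.inl hx))
  have genG1 : ∀ (i : Fin r), ∀ z ∈ omegaPred F n,
      b i • SF.d z ∈ AddSubgroup.closure G :=
    fun i z hz => AddSubgroup.subset_closure (Or.inl (Or.inr ⟨i, z, hz, rfl⟩))
  have genG2 : ∀ (t' : ℕ) (k' : Fin r → ℕ), 0 < t' → t' ≤ t →
      (∀ i, k' i < p ^ t' ∧ p ^ (t' + 1 - m i) ∣ k' i) →
      ∀ w' ∈ omegaPred F n,
        (∏ i, b i ^ k' i) • spIter SF t' (SF.d w') ∈ AddSubgroup.closure G :=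
    fun t' k' h1 h2 h3 w' hw' =>
      AddSubgroup.subset_closure (Or.inr ⟨t', k', h1, h2, h3, w', hw', rfl⟩)
  have monmem : ∀ q : Fin r → ℕ, (∏ i, b i ^ q i) ∈ Submonoid.closure (Set.range b) :=
    fun q => prod_mem fun i _ => pow_mem (Submonoid.subset_closure (Set.mem_range_self i)) _
  have good : ∀ x ∈ Submonoid.closure (Set.range b), ∀ z ∈ omegaPred F n,
      x • SF.d z ∈ AddSubgroup.closure G := by
    intro x hx
    induction hx using Submonoid.closure_induction with
    | mem x hx =>
      obtain ⟨i, rfl⟩ := hx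
      exact fun z hz => genG1 i z hz
    | one =>
      intro z hz
      rw [one_smul]
      exact genHrel _ (Cor37.d_mem_hRel SF n hz)
    | mul x y hx hy ihx ihy =>
      intro z hz
      rw [Cor37.I3 SF x y z]
      exact sub_mem
        (add_mem (ihx _ (Submodule.smul_mem _ _ hz)) (ihy _ (Submodule.smul_mem _ _ hz)))
        (genHrel _ (Cor37.d_mem_hRel SF n (Submodule.smul_mem _ _ hz)))
  have main : ∀ j, j ≤ t → ∀ kk : Fin r → ℕ, (∀ l, p ^ (j + 1 - m l) ∣ kk l) →
      ∀ w ∈ omegaPred F n,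
        (∏ i, b i ^ kk i) • spIter SF j (SF.d w) ∈ AddSubgroup.closure G := by
    intro j
    induction j using Nat.strong_induction_on with
    | _ j IH =>
    intro hjt kk hkk w hw
    rcases Nat.eq_zero_or_pos j with rfl | hj
    · exact good _ (monmem kk) w hw
    have errC : ∀ (kk' : Fin r → ℕ), (∀ l, p ^ (j + 1 - m l) ∣ kk' l) →
        ∀ e ∈ Cor37.errS SF n j, (∏ i, b i ^ kk' i) • e ∈ AddSubgroup.closure G := by
      intro kk' hkk' e he
      induction he using AddSubgroup.closure_induction with
      | mem x hx =>
        obtain ⟨i, hij, ζ, hζ, rfl⟩ := hx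
        refine IH i hij (by omega) kk' (fun l => ?_) ζ hζ
        exact dvd_trans (pow_dvd_pow p (by omega)) (hkk' l)
      | zero => rw [smul_zero]; exact zero_mem _
      | add x y hx hy ihx ihy => rw [smul_add]; exact add_mem ihx ihy
      | neg x hx ihx => rw [smul_neg]; exact neg_mem ihx
    have hP : ∀ y ∈ Submonoid.closure (Set.range b),
        ∀ (kk' : Fin r → ℕ), (∀ l, kk' l < p ^ j ∧ p ^ (j + 1 - m l) ∣ kk' l) →
        ∀ w' ∈ omegaPred F n,
          (∏ i, b i ^ kk' i) • (y ^ p ^ j • spIter SF j (SF.d w'))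
            ∈ AddSubgroup.closure G := by
      intro y hy
      induction hy using Submonoid.closure_induction with
      | one =>
        intro kk' hkk' w' hw'
        rw [one_pow, one_smul]
        exact genG2 j kk' hj hjt hkk' w' hw'
      | mem y hy =>
        obtain ⟨l, rfl⟩ := hy
        intro kk' hkk' w' hw'
        have e₁mem := Cor37.LB hp0 SF n (b l) (Cor37.d_mem_omegaPow SF n hw') j
        obtain ⟨w₁, hw₁, e₂mem⟩ := Cor37.spBiter hp0 SF n (hb0 l) hw' j
        have hrel1 : spIter SF j (b l • SF.d w')
            = spIter SF j (SF.d (b l • w')) - spIter SF j (dForm F (b l) * w') := by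
          rw [← Cor37.spIter_sub]
          congr 1
          rw [SF.d_smul]
          abel
        have hrel2 : dForm F (b l) * w₁ = SF.d (b l • w₁) - b l • SF.d w₁ := by
          rw [SF.d_smul]; abel
        have key : (b l) ^ p ^ j • spIter SF j (SF.d w')
            = spIter SF j (SF.d (b l • w'))
              - (b l) ^ (p ^ j - 1) • SF.d (b l • w₁)
              + ((b l) ^ (p ^ j - 1) * b l) • SF.d w₁
              - ((spIter SF j (dForm F (b l) * w')
                    - (b l) ^ (p ^ j - 1) • (dForm F (b l) * w₁))
                 + (spIter SF j (b l • SF.d w')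
                    - (b l) ^ p ^ j • spIter SF j (SF.d w'))) := by
          rw [hrel1, hrel2, smul_sub, smul_smul]
          abel
        have m1 : (∏ i, b i ^ kk' i) • spIter SF j (SF.d (b l • w'))
            ∈ AddSubgroup.closure G :=
          genG2 j kk' hj hjt hkk' _ (Submodule.smul_mem _ _ hw')
        have m2 : (∏ i, b i ^ kk' i) • ((b l) ^ (p ^ j - 1) • SF.d (b l • w₁))
            ∈ AddSubgroup.closure G := by
          rw [smul_smul]
          exact good _ (mul_mem (monmem kk')
            (pow_mem (Submonoid.subset_closure (Set.mem_range_self l)) _)) _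
            (Submodule.smul_mem _ _ hw₁)
        have m3 : (∏ i, b i ^ kk' i) • (((b l) ^ (p ^ j - 1) * b l) • SF.d w₁)
            ∈ AddSubgroup.closure G := by
          rw [smul_smul]
          exact good _ (mul_mem (monmem kk') (mul_mem
            (pow_mem (Submonoid.subset_closure (Set.mem_range_self l)) _)
            (Submonoid.subset_closure (Set.mem_range_self l)))) _ hw₁
        have m4 : (∏ i, b i ^ kk' i) •
            ((spIter SF j (dForm F (b l) * w')
                - (b l) ^ (p ^ j - 1) • (dForm F (b l) * w₁))
             + (spIter SF j (b l • SF.d w')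
                - (b l) ^ p ^ j • spIter SF j (SF.d w'))) ∈ AddSubgroup.closure G :=
          errC kk' (fun l' => (hkk' l').2) _ (add_mem e₂mem e₁mem)
        rw [key, smul_sub, smul_add, smul_sub]
        exact sub_mem (add_mem (sub_mem m1 m2) m3) m4
      | mul y₁ y₂ hy₁ hy₂ ih₁ ih₂ =>
        intro kk' hkk' w' hw'
        have e₀ := Cor37.LB hp0 SF n (y₁ * y₂) (Cor37.d_mem_omegaPow SF n hw') j
        have e₁ := Cor37.LB hp0 SF n y₁
          (Cor37.d_mem_omegaPow SF n (Submodule.smul_mem _ y₂ hw')) j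
        have e₂ := Cor37.LB hp0 SF n y₂
          (Cor37.d_mem_omegaPow SF n (Submodule.smul_mem _ y₁ hw')) j
        have hI : spIter SF j ((y₁ * y₂) • SF.d w')
            = spIter SF j (y₁ • SF.d (y₂ • w')) + spIter SF j (y₂ • SF.d (y₁ • w'))
              - spIter SF j (SF.d ((y₁ * y₂) • w')) := by
          rw [← Cor37.spIter_add, ← Cor37.spIter_sub]
          congr 1
          exact Cor37.I3 SF y₁ y₂ w'
        have key : (y₁ * y₂) ^ p ^ j • spIter SF j (SF.d w')
            = y₁ ^ p ^ j • spIter SF j (SF.d (y₂ • w'))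
              + y₂ ^ p ^ j • spIter SF j (SF.d (y₁ • w'))
              - spIter SF j (SF.d ((y₁ * y₂) • w'))
              + ((spIter SF j (y₁ • SF.d (y₂ • w'))
                    - y₁ ^ p ^ j • spIter SF j (SF.d (y₂ • w')))
                 + (spIter SF j (y₂ • SF.d (y₁ • w'))
                    - y₂ ^ p ^ j • spIter SF j (SF.d (y₁ • w')))
                 - (spIter SF j ((y₁ * y₂) • SF.d w')
                    - (y₁ * y₂) ^ p ^ j • spIter SF j (SF.d w'))) := by
          rw [hI]
          abel
        rw [key, smul_add, smul_sub, smul_add]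
        exact add_mem
          (sub_mem (add_mem (ih₁ kk' hkk' _ (Submodule.smul_mem _ _ hw'))
              (ih₂ kk' hkk' _ (Submodule.smul_mem _ _ hw')))
            (genG2 j kk' hj hjt hkk' _ (Submodule.smul_mem _ _ hw')))
          (errC kk' (fun l' => (hkk' l').2) _ (sub_mem (add_mem e₁ e₂) e₀))
    have hsq : ∀ l, b l ^ kk l = b l ^ (kk l % p ^ j) * (b l ^ (kk l / p ^ j)) ^ p ^ j := by
      intro l
      rw [← pow_mul, ← pow_add]
      congr 1
      exact (Nat.mod_add_div' (kk l) (p ^ j)).symm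
    have hprod : (∏ i, b i ^ kk i)
        = (∏ i, b i ^ (kk i % p ^ j)) * (∏ i, b i ^ (kk i / p ^ j)) ^ p ^ j := by
      rw [← Finset.prod_pow, ← Finset.prod_mul_distrib]
      exact Finset.prod_congr rfl fun i _ => hsq i
    have hsdvd : ∀ l, kk l % p ^ j < p ^ j ∧ p ^ (j + 1 - m l) ∣ kk l % p ^ j := by
      intro l
      refine ⟨Nat.mod_lt _ (pow_pos hppos j), ?_⟩
      exact (Nat.dvd_mod_iff (pow_dvd_pow p (by have := hm l; omega))).mpr (hkk l)
    rw [hprod, mul_smul]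
    exact hP _ (monmem _) _ hsdvd w hw
  have conj2 : (∏ i, b i ^ k i) • spIter SF t (SF.d v) ∈ AddSubgroup.closure G :=
    main t le_rfl k hk v hv
  refine ⟨?_, conj2⟩
  have resmem : ∀ x ∈ AddSubgroup.closure G, R.res x ∈ hRel SE n := by
    intro x hx
    induction hx using AddSubgroup.closure_induction with
    | zero => rw [map_zero]; exact zero_mem _
    | add x y hx hy ihx ihy => rw [map_add]; exact add_mem ihx ihy
    | neg x hx ihx => rw [map_neg]; exact neg_mem ihx
    | mem x hx =>
      rcases hx with (hx | hx) | hx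
      · rcases AddSubgroup.mem_sup.mp hx with ⟨u', hu', z', hz', rfl⟩
        rcases hu' with ⟨u, hu, rfl⟩
        rcases hz' with ⟨ζ', hζ', rfl⟩
        rw [map_add, R.res_d]
        refine add_mem ?_ (Cor37.d_mem_hRel SE n (Cor37.res_omegaPred R n hζ'))
        obtain ⟨ξ, hξ, hres⟩ := Cor37.RS hp0 R n hu
        have happF : asMap SF u = SF.sp u - u := rfl
        have happE : asMap SE (R.res u) = SE.sp (R.res u) - R.res u := rfl
        have heq : R.res (asMap SF u) = asMap SE (R.res u) + SE.d ξ := by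
          rw [happF, happE, map_sub, hres]
          abel
        rw [heq]
        exact add_mem (Cor37.as_mem_hRel SE n (R.res_grade n u hu))
          (Cor37.d_mem_hRel SE n hξ)
      · obtain ⟨i, z, hz, rfl⟩ := hx
        rw [R.res_smul, R.res_d]
        have hb' : algebraMap F E (b i) = (β i ^ p ^ (m i - 1)) ^ p := by
          rw [← pow_mul, ← pow_succ, Nat.sub_add_cancel (hm i)]
          exact (hβ i).symm
        rw [hb', Cor37.d_smul_of_dvd hp0 SE (β i ^ p ^ (m i - 1)) (dvd_refl p)]
        exact Cor37.d_mem_hRel SE n (Submodule.smul_mem _ _ (Cor37.res_omegaPred R n hz))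
      · obtain ⟨t', k', ht'0, ht't, hk', w, hw, rfl⟩ := hx
        rw [R.res_smul]
        have hdvd : ∀ l, p ^ (t' + 1) ∣ p ^ m l * k' l := by
          intro l
          rcases le_or_gt (t' + 1) (m l) with h | h
          · exact dvd_mul_of_dvd_left (pow_dvd_pow p h) _
          · obtain ⟨c, hc⟩ := (hk' l).2
            refine ⟨c, ?_⟩
            rw [hc, ← mul_assoc, ← pow_add]
            congr 2
            omega
        have hδ : algebraMap F E (∏ i, b i ^ k' i)
            = (∏ l, β l ^ (p ^ m l * k' l / p ^ (t' + 1))) ^ p ^ (t' + 1) := by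
          rw [map_prod, ← Finset.prod_pow]
          refine Finset.prod_congr rfl fun l _ => ?_
          rw [map_pow, ← hβ l, ← pow_mul, ← pow_mul, Nat.div_mul_cancel (hdvd l)]
        set δ : E := ∏ l, β l ^ (p ^ m l * k' l / p ^ (t' + 1)) with hδdef
        have herr := Cor37.RSiter hp0 R n hw t'
        have keyres : R.res (spIter SF t' (SF.d w))
            = spIter SE t' (SE.d (R.res w))
              + (R.res (spIter SF t' (SF.d w)) - spIter SE t' (SE.d (R.res w))) := by
          abel
        rw [hδ, keyres, smul_add]
        refine add_mem (Cor37.Wlem hp0 SE n t' δ (Cor37.res_omegaPred R n hw)) ?_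
        have herr' : ∀ e ∈ Cor37.errS SE n t', δ ^ p ^ (t' + 1) • e ∈ hRel SE n := by
          intro e he
          induction he using AddSubgroup.closure_induction with
          | mem x hx =>
            obtain ⟨i, hit, ζ, hζ, rfl⟩ := hx
            have hsplit : δ ^ p ^ (t' + 1) = (δ ^ p ^ (t' - i)) ^ p ^ (i + 1) := by
              rw [← pow_mul, ← pow_add]
              have : t' - i + (i + 1) = t' + 1 := by omega
              rw [this]
            rw [hsplit]
            exact Cor37.Wlem hp0 SE n i _ hζ
          | zero => rw [smul_zero]; exact zero_mem _
          | add x y hx hy ihx ihy => rw [smul_add]; exact add_mem ihx ihy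
          | neg x hx ihx => rw [smul_neg]; exact neg_mem ihx
        exact herr' _ herr
  exact resmem _ conj2
end
end
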